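/- arXiv:2101.09600 — 3 statements merged into one kernel-verified Lean document; each statement's English description precedes it below -/
import Mathlib

section
/- Let 0 ≤ f ∈ L¹[-π,π]. Let u and v solve the Dirichlet Poisson problems -u'' = f, u(-π) = u(π) = 0 and -v'' = f^#, v(-π) = v(π) = 0, where f^# is the symmetric decreasing rearrangement of f. Then ∫_{-π}^{π} φ(u) dx ≤ ∫_{-π}^{π} φ(v) dx for every increasing convex function φ: ℝ → ℝ. -/
open Real MeasureTheory Set

noncomputable section

/-- `u` (with derivative `u'`) is a solution of the Dirichlet Poisson problem
`-u'' = f` on `(-π, π)` with zero boundary values. -/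
def DirichletSol (f u u' : ℝ → ℝ) : Prop :=
  (∀ x ∈ Icc (-π) π, HasDerivWithinAt u (u' x) (Icc (-π) π) x) ∧
  ContinuousOn u' (Icc (-π) π) ∧
  (∀ x ∈ Icc (-π) π, u' x = u' (-π) - ∫ t in (-π)..x, f t) ∧
  (u (-π) = 0 ∧ u π = 0)

/-- The decreasing rearrangement of `f : [-π,π] → ℝ`, evaluated at `t`. -/
def decRearr (f : ℝ → ℝ) (t : ℝ) : ℝ :=
  sInf {s : ℝ | (volume {x : ℝ | x ∈ Icc (-π) π ∧ s < f x}).toReal ≤ t}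

/-- The symmetric decreasing rearrangement of `f : [-π,π] → ℝ`. -/
def symDecRearr (f : ℝ → ℝ) (x : ℝ) : ℝ := decRearr f (2 * |x|)

namespace DCP

open scoped ENNReal

/-! ### The Green kernel -/

/-- Dirichlet Green kernel on `[-π,π]`. -/
def Gker (x s : ℝ) : ℝ := (π + min x s) * (π - max x s) / (2 * π)

lemma Gker_alt (x s : ℝ) : Gker x s = (π ^ 2 - π * |x - s| - x * s) / (2 * π) := by
  rcases le_total x s with h | h
  · rw [Gker, min_eq_left h, max_eq_right h, abs_of_nonpos (by linarith)]; ring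
  · rw [Gker, min_eq_right h, max_eq_left h, abs_of_nonneg (by linarith)]; ring

lemma Gker_eq (x s : ℝ) : Gker x s = (x + π) * (π - s) / (2 * π) - max (x - s) 0 := by
  have hπ : (0:ℝ) < 2 * π := by positivity
  rcases le_total x s with h | h
  · rw [Gker, min_eq_left h, max_eq_right h, max_eq_right (by linarith : x - s ≤ 0)]
    ring
  · rw [Gker, min_eq_right h, max_eq_left h, max_eq_left (by linarith : (0:ℝ) ≤ x - s)]
    field_simp
    ring

lemma abs_add_abs_sub (x s : ℝ) : |x - s| + |x + s| = 2 * max |x| |s| := by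
  rcases abs_cases (x - s) with ⟨h1, h1'⟩ | ⟨h1, h1'⟩ <;>
    rcases abs_cases (x + s) with ⟨h2, h2'⟩ | ⟨h2, h2'⟩ <;>
    rcases abs_cases x with ⟨h3, h3'⟩ | ⟨h3, h3'⟩ <;>
    rcases abs_cases s with ⟨h4, h4'⟩ | ⟨h4, h4'⟩ <;>
    rcases max_cases |x| |s| with ⟨h5, h5'⟩ | ⟨h5, h5'⟩ <;> linarith

lemma Gker_add_neg (x s : ℝ) : Gker x s + Gker x (-s) = π - max |x| |s| := by
  have hπ : (0:ℝ) < 2 * π := by positivity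
  have h := abs_add_abs_sub x s
  rw [Gker_alt, Gker_alt]
  have hxs : x - -s = x + s := by ring
  rw [hxs]
  field_simp
  nlinarith [h]

lemma Gker_nonneg {x s : ℝ} (hx : x ∈ Icc (-π) π) (hs : s ∈ Icc (-π) π) :
    0 ≤ Gker x s := by
  have hπ : (0:ℝ) < 2 * π := by positivity
  apply div_nonneg _ (le_of_lt hπ)
  have h1 : -π ≤ min x s := le_min hx.1 hs.1
  have h2 : max x s ≤ π := max_le hx.2 hs.2
  nlinarith

lemma Gker_le {x s : ℝ} (hx : x ∈ Icc (-π) π) (hs : s ∈ Icc (-π) π) :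
    Gker x s ≤ 2 * π := by
  have hπ : (0:ℝ) < π := Real.pi_pos
  rw [Gker]
  rw [div_le_iff₀ (by positivity)]
  have h1 : -π ≤ min x s := le_min hx.1 hs.1
  have h2 : max x s ≤ π := max_le hx.2 hs.2
  have h3 : min x s ≤ π := le_trans (min_le_left _ _) hx.2
  have h4 : -π ≤ max x s := le_trans hx.1 (le_max_left _ _)
  nlinarith

lemma Gker_continuous (x : ℝ) : Continuous (fun s => Gker x s) := by
  unfold Gker
  fun_prop

/-! ### Integrability of kernel products -/

lemma cont_mul_integrable {f : ℝ → ℝ} (hf : IntegrableOn f (Icc (-π) π))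
    {g : ℝ → ℝ} (hg : Continuous g) :
    IntegrableOn (fun s => g s * f s) (Icc (-π) π) := by
  obtain ⟨C, hC⟩ := IsCompact.exists_bound_of_continuousOn isCompact_Icc hg.continuousOn
  exact Integrable.bdd_mul hf hg.aestronglyMeasurable
    ((ae_restrict_iff' measurableSet_Icc).mpr (ae_of_all _ hC))

/-! ### FTC and representation formula -/

lemma ftc {f u u' : ℝ → ℝ} (hu : DirichletSol f u u') {x : ℝ}
    (hx : x ∈ Icc (-π) π) : u x = ∫ t in (-π)..x, u' t := by
  obtain ⟨hder, hcont, hval, hb1, hb2⟩ := hu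
  have hsub : Icc (-π) x ⊆ Icc (-π) π := Icc_subset_Icc le_rfl hx.2
  have hcu : ContinuousOn u (Icc (-π) x) := fun y hy =>
    ((hder y (hsub hy)).continuousWithinAt).mono hsub
  have hderiv : ∀ t ∈ Ioo (-π) x, HasDerivWithinAt u (u' t) (Ioi t) t := by
    intro t ht
    have htπ : t < π := lt_of_lt_of_le ht.2 hx.2
    have htI : t ∈ Icc (-π) π := ⟨ht.1.le, htπ.le⟩
    refine (hder t htI).mono_of_mem_nhdsWithin ?_
    have h1 : Ioi t ∩ Iio π ∈ nhdsWithin t (Ioi t) :=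
      Filter.inter_mem self_mem_nhdsWithin
        (mem_nhdsWithin_of_mem_nhds (isOpen_Iio.mem_nhds htπ))
    exact Filter.mem_of_superset h1 fun y hy => ⟨(lt_trans ht.1 hy.1).le, hy.2.le⟩
  have hint : IntervalIntegrable u' volume (-π) x := by
    apply ContinuousOn.intervalIntegrable
    rw [uIcc_of_le hx.1]
    exact hcont.mono hsub
  have h := intervalIntegral.integral_eq_sub_of_hasDeriv_right_of_le hx.1 hcu hderiv hint
  rw [h, hb1, sub_zero]

lemma primitive_fubini {f : ℝ → ℝ} (hf : IntegrableOn f (Icc (-π) π)) {x : ℝ}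
    (hx : x ∈ Icc (-π) π) :
    ∫ t in (-π)..x, (∫ s in (-π)..t, f s) = ∫ s in (-π)..x, (x - s) * f s := by
  have hxle : -π ≤ x := hx.1
  set ν := volume.restrict (Ioc (-π) x) with hν
  have hνuniv : ν univ ≠ ⊤ := by
    rw [hν, Measure.restrict_apply_univ]
    exact measure_Ioc_lt_top.ne
  have hfν : IntegrableOn f (Ioc (-π) x) :=
    hf.mono_set fun y hy => ⟨hy.1.le, le_trans hy.2 hx.2⟩
  set T : ℝ × ℝ → ℝ := Set.indicator {p : ℝ × ℝ | p.2 ≤ p.1} (fun p => f p.2) with hT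
  have hsnd : Integrable (fun p : ℝ × ℝ => f p.2) (ν.prod ν) := by
    have hmap : (ν.prod ν).map Prod.snd = ν univ • ν := Measure.map_snd_prod
    have h1 : Integrable f (ν univ • ν) := hfν.smul_measure hνuniv
    have h2 : AEStronglyMeasurable f ((ν.prod ν).map Prod.snd) := by
      rw [hmap]
      exact hfν.aestronglyMeasurable.mono_ac Measure.smul_absolutelyContinuous
    have h3 : Integrable f ((ν.prod ν).map Prod.snd) := by rw [hmap]; exact h1
    exact (integrable_map_measure h2 measurable_snd.aemeasurable).mp h3
  have hTmeas : MeasurableSet {p : ℝ × ℝ | p.2 ≤ p.1} :=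
    measurableSet_le measurable_snd measurable_fst
  have hTint : Integrable T (ν.prod ν) := hsnd.indicator hTmeas
  have swap := integral_integral_swap (μ := ν) (ν := ν) (f := fun t s => T (t, s))
    (by exact hTint)
  have hL : (∫ t, (∫ s, T (t, s) ∂ν) ∂ν) = ∫ t in (-π)..x, (∫ s in (-π)..t, f s) := by
    rw [hν, intervalIntegral.integral_of_le hxle]
    refine setIntegral_congr_fun measurableSet_Ioc fun t ht => ?_
    have h1 : (fun s => T (t, s)) = Set.indicator (Iic t) f := by
      funext s
      simp [hT, Set.indicator_apply, mem_Iic, mem_setOf_eq]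
    rw [h1, setIntegral_indicator measurableSet_Iic, Ioc_inter_Iic,
      intervalIntegral.integral_of_le ht.1.le, inf_eq_right.mpr ht.2]
  have hR : (∫ s, (∫ t, T (t, s) ∂ν) ∂ν) = ∫ s in (-π)..x, (x - s) * f s := by
    rw [hν, intervalIntegral.integral_of_le hxle]
    refine setIntegral_congr_fun measurableSet_Ioc fun s hs => ?_
    have h1 : (fun t => T (t, s)) = Set.indicator (Ici s) (fun _ => f s) := by
      funext t
      simp [hT, Set.indicator_apply, mem_Ici, mem_setOf_eq]
    rw [h1, setIntegral_indicator measurableSet_Ici, setIntegral_const]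
    have h2 : Ioc (-π) x ∩ Ici s = Icc s x := by
      ext y
      simp only [mem_inter_iff, mem_Ioc, mem_Ici, mem_Icc]
      exact ⟨fun h => ⟨h.2, h.1.2⟩, fun h => ⟨⟨lt_of_lt_of_le hs.1 h.1, h.2⟩, h.1⟩⟩
    rw [h2, Real.volume_real_Icc_of_le (by linarith [hs.2] : s ≤ x),
      smul_eq_mul]
  rw [← hL, ← hR]
  exact swap

lemma rep {f u u' : ℝ → ℝ} (hf : IntegrableOn f (Icc (-π) π))
    (hu : DirichletSol f u u') {x : ℝ} (hx : x ∈ Icc (-π) π) :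
    u x = ∫ s in Icc (-π) π, Gker x s * f s := by
  have hππ : -π ≤ π := by linarith [pi_pos]
  have h2π : (0:ℝ) < 2 * π := by positivity
  obtain ⟨hder, hcont, hval, hb1, hb2⟩ := hu
  have hu' : DirichletSol f u u' := ⟨hder, hcont, hval, hb1, hb2⟩
  set K := u' (-π) with hK
  have hFcont : ContinuousOn (fun t => ∫ s in (-π)..t, f s) (Icc (-π) π) := by
    have h1 : ContinuousOn (fun t => K - u' t) (Icc (-π) π) := continuousOn_const.sub hcont
    refine h1.congr fun t ht => ?_
    show (∫ s in (-π)..t, f s) = K - u' t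
    rw [hval t ht]
    ring
  have hFint : ∀ y ∈ Icc (-π) π,
      IntervalIntegrable (fun t => ∫ s in (-π)..t, f s) volume (-π) y := by
    intro y hy
    apply ContinuousOn.intervalIntegrable
    rw [uIcc_of_le hy.1]
    exact hFcont.mono (Icc_subset_Icc le_rfl hy.2)
  have step1 : ∀ y ∈ Icc (-π) π, u y = K * (y + π) - ∫ s in (-π)..y, (y - s) * f s := by
    intro y hy
    have h1 : u y = ∫ t in (-π)..y, u' t := ftc hu' hy
    have h2 : (∫ t in (-π)..y, u' t)
        = ∫ t in (-π)..y, (K - ∫ s in (-π)..t, f s) := by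
      refine intervalIntegral.integral_congr fun t ht => ?_
      rw [uIcc_of_le hy.1] at ht
      exact hval t ⟨ht.1, le_trans ht.2 hy.2⟩
    have h3 : (∫ t in (-π)..y, (K - ∫ s in (-π)..t, f s))
        = (∫ t in (-π)..y, K) - ∫ t in (-π)..y, (∫ s in (-π)..t, f s) :=
      intervalIntegral.integral_sub intervalIntegrable_const (hFint y hy)
    rw [h1, h2, h3, intervalIntegral.integral_const, primitive_fubini hf hy, smul_eq_mul]
    ring_nf
  have hKeq : K * (2 * π) = ∫ s in (-π)..π, (π - s) * f s := by
    have h1 := step1 π ⟨hππ, le_rfl⟩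
    rw [hb2] at h1
    have h2 : K * (2 * π) = K * (π + π) := by ring
    rw [h2]
    linarith
  -- interval integrability of kernel products
  have hgf : ∀ g : ℝ → ℝ, Continuous g → ∀ c d, c ∈ Icc (-π) π → d ∈ Icc (-π) π →
      IntervalIntegrable (fun s => g s * f s) volume c d := by
    intro g hg c d hc hd
    rw [intervalIntegrable_iff]
    exact (cont_mul_integrable hf hg).mono_set
      (uIoc_subset_uIcc.trans (uIcc_subset_Icc hc hd))
  have hxmem : x ∈ Icc (-π) π := hx
  have hcontmax : Continuous (fun s : ℝ => max (x - s) 0) :=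
    (continuous_const.sub continuous_id).max continuous_const
  have hsplit : (∫ s in (-π)..x, (x - s) * f s)
      = ∫ s in (-π)..π, max (x - s) 0 * f s := by
    have hA := hgf _ hcontmax (-π) x ⟨le_rfl, hππ⟩ hx
    have hB := hgf _ hcontmax x π hx ⟨hππ, le_rfl⟩
    rw [← intervalIntegral.integral_add_adjacent_intervals hA hB]
    have hZ : (∫ s in x..π, max (x - s) 0 * f s) = ∫ s in x..π, (0:ℝ) := by
      refine intervalIntegral.integral_congr fun s hs => ?_
      rw [uIcc_of_le hx.2] at hs
      rw [max_eq_right (by linarith [hs.1] : x - s ≤ 0), zero_mul]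
    have hF : (∫ s in (-π)..x, max (x - s) 0 * f s) = ∫ s in (-π)..x, (x - s) * f s := by
      refine intervalIntegral.integral_congr fun s hs => ?_
      rw [uIcc_of_le hx.1] at hs
      rw [max_eq_left (by linarith [hs.2] : 0 ≤ x - s)]
    rw [hZ, hF, intervalIntegral.integral_zero, add_zero]
  have hKx : K * (x + π) = ∫ s in (-π)..π, ((x + π) * (π - s) / (2 * π)) * f s := by
    have h1 : (∫ s in (-π)..π, ((x + π) * (π - s) / (2 * π)) * f s)
        = ∫ s in (-π)..π, ((x + π) / (2 * π)) * ((π - s) * f s) := by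
      refine intervalIntegral.integral_congr fun s _ => ?_
      ring
    rw [h1, intervalIntegral.integral_const_mul, ← hKeq]
    field_simp
  have hfinal : u x = ∫ s in (-π)..π, (((x + π) * (π - s) / (2 * π)) - max (x - s) 0) * f s := by
    have h1 : (∫ s in (-π)..π, (((x + π) * (π - s) / (2 * π)) - max (x - s) 0) * f s)
        = (∫ s in (-π)..π, ((x + π) * (π - s) / (2 * π)) * f s)
          - ∫ s in (-π)..π, max (x - s) 0 * f s := by
      rw [← intervalIntegral.integral_sub
        (hgf _ (by fun_prop) (-π) π ⟨le_rfl, hππ⟩ ⟨hππ, le_rfl⟩)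
        (hgf _ hcontmax (-π) π ⟨le_rfl, hππ⟩ ⟨hππ, le_rfl⟩)]
      refine intervalIntegral.integral_congr fun s _ => ?_
      ring
    rw [h1, ← hKx, ← hsplit]
    exact step1 x hx
  rw [hfinal, intervalIntegral.integral_of_le hππ, ← integral_Icc_eq_integral_Ioc]
  refine setIntegral_congr_fun measurableSet_Icc fun s _ => ?_
  rw [Gker_eq]

/-! ### The distribution function and decreasing rearrangement -/

/-- distribution function of `f` on `[-π, π]`. -/
def muf (f : ℝ → ℝ) (s : ℝ) : ℝ≥0∞ := volume {x : ℝ | x ∈ Icc (-π) π ∧ s < f x}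

lemma decRearr_eq (f : ℝ → ℝ) (t : ℝ) :
    decRearr f t = sInf {s : ℝ | (muf f s).toReal ≤ t} := rfl

lemma muf_le (f : ℝ → ℝ) (s : ℝ) : muf f s ≤ ENNReal.ofReal (2 * π) := by
  have : volume (Icc (-π) π) = ENNReal.ofReal (2 * π) := by
    have h : π - (-π) = 2 * π := by ring
    rw [Real.volume_Icc, h]
  rw [← this]
  exact measure_mono (fun x hx => hx.1)

lemma muf_ne_top (f : ℝ → ℝ) (s : ℝ) : muf f s ≠ ⊤ :=
  (lt_of_le_of_lt (muf_le f s) ENNReal.ofReal_lt_top).ne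

lemma muf_anti (f : ℝ → ℝ) : Antitone (muf f) := by
  intro s t hst
  exact measure_mono (fun x hx => ⟨hx.1, lt_of_le_of_lt hst hx.2⟩)

lemma muf_toReal_le (f : ℝ → ℝ) (s : ℝ) : (muf f s).toReal ≤ 2 * π :=
  ENNReal.toReal_le_of_le_ofReal (by positivity) (muf_le f s)

lemma muf_of_neg {f : ℝ → ℝ} (hf0 : ∀ x ∈ Icc (-π) π, 0 ≤ f x) {s : ℝ} (hs : s < 0) :
    muf f s = ENNReal.ofReal (2 * π) := by
  have hset : {x : ℝ | x ∈ Icc (-π) π ∧ s < f x} = Icc (-π) π := by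
    ext x
    exact ⟨fun h => h.1, fun h => ⟨h, lt_of_lt_of_le hs (hf0 x h)⟩⟩
  rw [muf, hset, Real.volume_Icc]
  congr 1
  ring

lemma lint_f_lt_top {f : ℝ → ℝ} (hf : IntegrableOn f (Icc (-π) π)) :
    ∫⁻ x in Icc (-π) π, ENNReal.ofReal (f x) < ⊤ := by
  refine lt_of_le_of_lt (lintegral_mono fun x => ?_) hf.2
  rcases le_total 0 (f x) with h | h
  · rw [Real.enorm_eq_ofReal h]
  · rw [ENNReal.ofReal_eq_zero.mpr h]
    exact zero_le

lemma layer_f {f : ℝ → ℝ} (hf : IntegrableOn f (Icc (-π) π))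
    (hf0 : ∀ x ∈ Icc (-π) π, 0 ≤ f x) :
    ∫⁻ x in Icc (-π) π, ENNReal.ofReal (f x) = ∫⁻ lam in Ioi (0:ℝ), muf f lam := by
  rw [lintegral_eq_lintegral_meas_lt (volume.restrict (Icc (-π) π))
    ((ae_restrict_iff' measurableSet_Icc).mpr (ae_of_all _ hf0))
    hf.aestronglyMeasurable.aemeasurable]
  refine setLIntegral_congr_fun_ae measurableSet_Ioi (ae_of_all _ fun lam _ => ?_)
  rw [Measure.restrict_apply' measurableSet_Icc]
  congr 1
  ext x
  simp only [mem_inter_iff, mem_setOf_eq, mem_Icc]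
  tauto

lemma exists_mem {f : ℝ → ℝ} (hf : IntegrableOn f (Icc (-π) π)) {t : ℝ} (ht : 0 < t) :
    {s : ℝ | (muf f s).toReal ≤ t}.Nonempty := by
  set I := ∫⁻ x in Icc (-π) π, ENNReal.ofReal (f x) with hI
  have hIlt : I < ⊤ := lint_f_lt_top hf
  set s : ℝ := I.toReal / t + 1 with hs
  have hspos : 0 < s := by positivity
  refine ⟨s, ?_⟩
  have hmeas : AEMeasurable (fun x => ENNReal.ofReal (f x)) (volume.restrict (Icc (-π) π)) :=
    ENNReal.measurable_ofReal.comp_aemeasurable hf.aestronglyMeasurable.aemeasurable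
  have key := mul_meas_ge_le_lintegral₀ hmeas (ENNReal.ofReal s)
  have hsub : muf f s ≤ (volume.restrict (Icc (-π) π)) {x | ENNReal.ofReal s ≤ ENNReal.ofReal (f x)} := by
    rw [Measure.restrict_apply' measurableSet_Icc]
    refine measure_mono fun x hx => ⟨ENNReal.ofReal_le_ofReal hx.2.le, hx.1⟩
  have h2 : ENNReal.ofReal s * muf f s ≤ I :=
    le_trans (mul_le_mul_right hsub _) key
  have hb0 : ENNReal.ofReal s ≠ 0 := by
    simp only [ne_eq, ENNReal.ofReal_eq_zero, not_le]
    exact hspos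
  have h3 : muf f s ≤ I / ENNReal.ofReal s := by
    rw [ENNReal.le_div_iff_mul_le (Or.inl hb0) (Or.inl ENNReal.ofReal_ne_top), mul_comm]
    exact h2
  have h4 : (muf f s).toReal ≤ (I / ENNReal.ofReal s).toReal :=
    ENNReal.toReal_mono (ENNReal.div_lt_top hIlt.ne hb0).ne h3
  have h5 : (I / ENNReal.ofReal s).toReal = I.toReal / s := by
    rw [ENNReal.toReal_div, ENNReal.toReal_ofReal hspos.le]
  have h6 : I.toReal / s ≤ t := by
    rw [div_le_iff₀ hspos]
    have h7 : 0 ≤ I.toReal := ENNReal.toReal_nonneg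
    have : t * s = I.toReal + t := by
      rw [hs]; field_simp
    rw [this]; linarith
  show (muf f s).toReal ≤ t
  calc (muf f s).toReal ≤ (I / ENNReal.ofReal s).toReal := h4
    _ = I.toReal / s := h5
    _ ≤ t := h6

lemma not_bddBelow_univ_real : ¬ BddBelow (univ : Set ℝ) := by
  rintro ⟨c, hc⟩
  have := hc (mem_univ (c - 1))
  linarith

lemma decRearr_nonneg {f : ℝ → ℝ} (hf0 : ∀ x ∈ Icc (-π) π, 0 ≤ f x) (t : ℝ) :
    0 ≤ decRearr f t := by
  rcases lt_or_ge t (2 * π) with h | h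
  · refine Real.sInf_nonneg fun s hs => ?_
    by_contra hneg
    push_neg at hneg
    have hs2 : (muf f s).toReal ≤ t := hs
    rw [muf_of_neg hf0 hneg, ENNReal.toReal_ofReal (by positivity)] at hs2
    linarith
  · have huniv : {s : ℝ | (muf f s).toReal ≤ t} = univ :=
      eq_univ_of_forall fun s => le_trans (muf_toReal_le f s) h
    rw [decRearr_eq, huniv, Real.sInf_of_not_bddBelow not_bddBelow_univ_real]

/-- R1 : if `ofReal t < muf f lam` then `lam ≤ f* t`. -/
lemma le_decRearr {f : ℝ → ℝ} (hf : IntegrableOn f (Icc (-π) π)) {t lam : ℝ}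
    (ht : 0 < t) (h : ENNReal.ofReal t < muf f lam) : lam ≤ decRearr f t := by
  rw [decRearr_eq]
  refine le_csInf (exists_mem hf ht) fun b hb => ?_
  by_contra hb'
  push_neg at hb'
  have h1 : muf f lam ≤ muf f b := muf_anti f hb'.le
  have h2 : ENNReal.ofReal t < muf f b := lt_of_lt_of_le h h1
  have h3 : t < (muf f b).toReal :=
    (ENNReal.ofReal_lt_iff_lt_toReal ht.le (muf_ne_top f b)).mp h2
  rw [mem_setOf_eq] at hb
  linarith

/-- R2 : if `lam < f* t` (with `0 < t < 2π`) then `ofReal t < muf f lam`. -/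
lemma lt_muf {f : ℝ → ℝ} (hf0 : ∀ x ∈ Icc (-π) π, 0 ≤ f x) {t lam : ℝ}
    (ht : 0 < t) (ht2 : t < 2 * π) (h : lam < decRearr f t) :
    ENNReal.ofReal t < muf f lam := by
  by_contra h'
  push_neg at h'
  have h1 : (muf f lam).toReal ≤ t := ENNReal.toReal_le_of_le_ofReal ht.le h'
  have hbdd : BddBelow {s : ℝ | (muf f s).toReal ≤ t} := by
    refine ⟨0, fun s hs => ?_⟩
    by_contra hneg
    push_neg at hneg
    have hs2 : (muf f s).toReal ≤ t := hs
    rw [muf_of_neg hf0 hneg, ENNReal.toReal_ofReal (by positivity)] at hs2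
    linarith
  have h2 : decRearr f t ≤ lam := csInf_le hbdd h1
  linarith

lemma decRearr_anti {f : ℝ → ℝ} (hf : IntegrableOn f (Icc (-π) π))
    (hf0 : ∀ x ∈ Icc (-π) π, 0 ≤ f x) {t t' : ℝ} (ht : 0 < t) (h : t ≤ t') :
    decRearr f t' ≤ decRearr f t := by
  rcases lt_or_ge t' (2 * π) with h2 | h2
  · refine csInf_le_csInf ?_ (exists_mem hf ht) fun s hs => le_trans hs h
    refine ⟨0, fun s hs => ?_⟩
    by_contra hneg
    push_neg at hneg
    have hs2 : (muf f s).toReal ≤ t' := hs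
    rw [muf_of_neg hf0 hneg, ENNReal.toReal_ofReal (by positivity)] at hs2
    linarith
  · have huniv : {s : ℝ | (muf f s).toReal ≤ t'} = univ :=
      eq_univ_of_forall fun s => le_trans (muf_toReal_le f s) h2
    rw [decRearr_eq, huniv, Real.sInf_of_not_bddBelow not_bddBelow_univ_real]
    exact decRearr_nonneg hf0 t

/-- `ℝ≥0∞`-valued version of the decreasing rearrangement, globally antitone. -/
def fstarE (f : ℝ → ℝ) (t : ℝ) : ℝ≥0∞ :=
  if t ≤ 0 then ⊤ else ENNReal.ofReal (decRearr f t)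

lemma fstarE_eq (f : ℝ → ℝ) {t : ℝ} (ht : 0 < t) :
    fstarE f t = ENNReal.ofReal (decRearr f t) := by
  rw [fstarE, if_neg (not_le.mpr ht)]

lemma fstarE_anti {f : ℝ → ℝ} (hf : IntegrableOn f (Icc (-π) π))
    (hf0 : ∀ x ∈ Icc (-π) π, 0 ≤ f x) : Antitone (fstarE f) := by
  intro t t' h
  unfold fstarE
  by_cases ht' : t' ≤ 0
  · rw [if_pos (le_trans h ht'), if_pos ht']
  · rw [if_neg ht']
    by_cases ht : t ≤ 0
    · rw [if_pos ht]; exact le_top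
    · rw [if_neg ht]
      push_neg at ht
      exact ENNReal.ofReal_le_ofReal (decRearr_anti hf hf0 ht h)

lemma fstarE_meas {f : ℝ → ℝ} (hf : IntegrableOn f (Icc (-π) π))
    (hf0 : ∀ x ∈ Icc (-π) π, 0 ≤ f x) : Measurable (fstarE f) :=
  (fstarE_anti hf hf0).measurable

/-! ### Hardy–Littlewood set inequality -/

lemma hl_set {f : ℝ → ℝ} (hf : IntegrableOn f (Icc (-π) π))
    (hf0 : ∀ x ∈ Icc (-π) π, 0 ≤ f x) {E : Set ℝ} (hE : MeasurableSet E)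
    (hEsub : E ⊆ Icc (-π) π) {ℓ : ℝ} (hℓ : volume E ≤ ENNReal.ofReal ℓ) :
    ∫⁻ x in E, ENNReal.ofReal (f x) ≤ ∫⁻ t in Ioo (0:ℝ) ℓ, fstarE f t := by
  have hmono : volume.restrict E ≤ volume.restrict (Icc (-π) π) :=
    Measure.restrict_mono hEsub le_rfl
  have hfE : AEMeasurable f (volume.restrict E) :=
    hf.aestronglyMeasurable.aemeasurable.mono_measure hmono
  have hnnE : 0 ≤ᵐ[volume.restrict E] f :=
    (ae_restrict_iff' hE).mpr (ae_of_all _ fun x hx => hf0 x (hEsub hx))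
  have hstar_meas : AEMeasurable (decRearr f) (volume.restrict (Ioo (0:ℝ) ℓ)) := by
    have h1 : Measurable fun t => (fstarE f t).toReal :=
      ENNReal.measurable_toReal.comp (fstarE_meas hf hf0)
    refine h1.aemeasurable.congr ?_
    refine ((ae_restrict_iff' measurableSet_Ioo).mpr (ae_of_all _ fun t ht => ?_))
    show (fstarE f t).toReal = decRearr f t
    rw [fstarE_eq f ht.1, ENNReal.toReal_ofReal (decRearr_nonneg hf0 t)]
  have hnn' : 0 ≤ᵐ[volume.restrict (Ioo (0:ℝ) ℓ)] decRearr f :=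
    ae_of_all _ fun t => decRearr_nonneg hf0 t
  have hcongr : ∫⁻ t in Ioo (0:ℝ) ℓ, fstarE f t
      = ∫⁻ t in Ioo (0:ℝ) ℓ, ENNReal.ofReal (decRearr f t) :=
    setLIntegral_congr_fun_ae measurableSet_Ioo (ae_of_all _ fun t ht => fstarE_eq f ht.1)
  rw [lintegral_eq_lintegral_meas_lt (volume.restrict E) hnnE hfE, hcongr,
    lintegral_eq_lintegral_meas_le (volume.restrict (Ioo (0:ℝ) ℓ)) hnn' hstar_meas]
  refine lintegral_mono_ae ((ae_restrict_iff' measurableSet_Ioi).mpr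
    (ae_of_all _ fun lam hlam => ?_))
  rw [Measure.restrict_apply' hE, Measure.restrict_apply' measurableSet_Ioo]
  have le1 : volume ({a | lam < f a} ∩ E) ≤ muf f lam :=
    measure_mono fun x hx => ⟨hEsub hx.2, hx.1⟩
  have le2 : volume ({a | lam < f a} ∩ E) ≤ ENNReal.ofReal ℓ :=
    le_trans (measure_mono (inter_subset_right)) hℓ
  have hsub2 : Ioo 0 (min ℓ (muf f lam).toReal) ⊆ {t | lam ≤ decRearr f t} ∩ Ioo 0 ℓ := by
    intro t ht
    obtain ⟨ht0, htm⟩ := ht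
    have htℓ : t < ℓ := lt_of_lt_of_le htm (min_le_left _ _)
    have htμ : t < (muf f lam).toReal := lt_of_lt_of_le htm (min_le_right _ _)
    have h3 : ENNReal.ofReal t < muf f lam :=
      (ENNReal.ofReal_lt_iff_lt_toReal ht0.le (muf_ne_top f lam)).mpr htμ
    exact ⟨le_decRearr hf ht0 h3, ht0, htℓ⟩
  have hvol : ENNReal.ofReal (min ℓ (muf f lam).toReal)
      ≤ volume ({t | lam ≤ decRearr f t} ∩ Ioo 0 ℓ) := by
    calc ENNReal.ofReal (min ℓ (muf f lam).toReal)
        = volume (Ioo 0 (min ℓ (muf f lam).toReal)) := by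
          rw [Real.volume_Ioo, sub_zero]
      _ ≤ _ := measure_mono hsub2
  refine le_trans ?_ hvol
  rcases le_total ℓ ((muf f lam).toReal) with hc | hc
  · rw [min_eq_left hc]; exact le2
  · rw [min_eq_right hc, ENNReal.ofReal_toReal (muf_ne_top f lam)]; exact le1

lemma fstar_le_f {f : ℝ → ℝ} (hf : IntegrableOn f (Icc (-π) π))
    (hf0 : ∀ x ∈ Icc (-π) π, 0 ≤ f x) :
    ∫⁻ t in Ioo (0:ℝ) (2 * π), fstarE f t ≤ ∫⁻ x in Icc (-π) π, ENNReal.ofReal (f x) := by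
  have hstar_meas : AEMeasurable (decRearr f) (volume.restrict (Ioo (0:ℝ) (2 * π))) := by
    have h1 : Measurable fun t => (fstarE f t).toReal :=
      ENNReal.measurable_toReal.comp (fstarE_meas hf hf0)
    refine h1.aemeasurable.congr ?_
    refine ((ae_restrict_iff' measurableSet_Ioo).mpr (ae_of_all _ fun t ht => ?_))
    show (fstarE f t).toReal = decRearr f t
    rw [fstarE_eq f ht.1, ENNReal.toReal_ofReal (decRearr_nonneg hf0 t)]
  have hnn' : 0 ≤ᵐ[volume.restrict (Ioo (0:ℝ) (2 * π))] decRearr f :=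
    ae_of_all _ fun t => decRearr_nonneg hf0 t
  have hcongr : ∫⁻ t in Ioo (0:ℝ) (2 * π), fstarE f t
      = ∫⁻ t in Ioo (0:ℝ) (2 * π), ENNReal.ofReal (decRearr f t) :=
    setLIntegral_congr_fun_ae measurableSet_Ioo (ae_of_all _ fun t ht => fstarE_eq f ht.1)
  rw [hcongr, lintegral_eq_lintegral_meas_lt _ hnn' hstar_meas, layer_f hf hf0]
  refine lintegral_mono_ae ((ae_restrict_iff' measurableSet_Ioi).mpr
    (ae_of_all _ fun lam hlam => ?_))
  rw [Measure.restrict_apply' measurableSet_Ioo]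
  have hsub : {a | lam < decRearr f a} ∩ Ioo 0 (2 * π) ⊆ Ioo 0 ((muf f lam).toReal) := by
    intro t ⟨h1, h2, h3⟩
    have h4 : ENNReal.ofReal t < muf f lam := lt_muf hf0 h2 h3 h1
    exact ⟨h2, (ENNReal.ofReal_lt_iff_lt_toReal h2.le (muf_ne_top f lam)).mp h4⟩
  calc volume ({a | lam < decRearr f a} ∩ Ioo 0 (2 * π))
      ≤ volume (Ioo 0 ((muf f lam).toReal)) := measure_mono hsub
    _ = ENNReal.ofReal ((muf f lam).toReal) := by rw [Real.volume_Ioo, sub_zero]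
    _ = muf f lam := ENNReal.ofReal_toReal (muf_ne_top f lam)

lemma fstar_integrableOn {f : ℝ → ℝ} (hf : IntegrableOn f (Icc (-π) π))
    (hf0 : ∀ x ∈ Icc (-π) π, 0 ≤ f x) :
    IntegrableOn (decRearr f) (Ioo (0:ℝ) (2 * π)) := by
  have hstar_meas : AEMeasurable (decRearr f) (volume.restrict (Ioo (0:ℝ) (2 * π))) := by
    have h1 : Measurable fun t => (fstarE f t).toReal :=
      ENNReal.measurable_toReal.comp (fstarE_meas hf hf0)
    refine h1.aemeasurable.congr ?_
    refine ((ae_restrict_iff' measurableSet_Ioo).mpr (ae_of_all _ fun t ht => ?_))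
    show (fstarE f t).toReal = decRearr f t
    rw [fstarE_eq f ht.1, ENNReal.toReal_ofReal (decRearr_nonneg hf0 t)]
  refine ⟨hstar_meas.aestronglyMeasurable, ?_⟩
  show (∫⁻ t in Ioo (0:ℝ) (2 * π), ‖decRearr f t‖₊) < ⊤
  have heq : ∫⁻ t in Ioo (0:ℝ) (2 * π), (‖decRearr f t‖₊ : ℝ≥0∞)
      = ∫⁻ t in Ioo (0:ℝ) (2 * π), fstarE f t := by
    refine setLIntegral_congr_fun_ae measurableSet_Ioo (ae_of_all _ fun t ht => ?_)
    rw [← enorm_eq_nnnorm, Real.enorm_eq_ofReal (decRearr_nonneg hf0 t), fstarE_eq f ht.1]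
  rw [heq]
  exact lt_of_le_of_lt (fstar_le_f hf hf0) (lint_f_lt_top hf)

lemma symDecRearr_integrableOn {f : ℝ → ℝ} (hf : IntegrableOn f (Icc (-π) π))
    (hf0 : ∀ x ∈ Icc (-π) π, 0 ≤ f x) :
    IntegrableOn (symDecRearr f) (Icc (-π) π) := by
  have hbase : IntegrableOn (decRearr f) (Ioc (0:ℝ) (2 * π)) :=
    (fstar_integrableOn hf hf0).congr_set_ae Ioo_ae_eq_Ioc.symm
  have hII : IntervalIntegrable (decRearr f) volume 0 (2 * π) := by
    rw [intervalIntegrable_iff_integrableOn_Ioc_of_le (by positivity)]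
    exact hbase
  have hcomp : IntervalIntegrable (fun x => decRearr f (2 * x)) volume 0 π := by
    have := hII.comp_mul_left (c := 2) enorm_ne_top enorm_ne_top
    norm_num at this
    convert this using 2 <;> ring
  have hpos : IntegrableOn (symDecRearr f) (Ioc (0:ℝ) π) := by
    have h1 : IntegrableOn (fun x => decRearr f (2 * x)) (Ioc (0:ℝ) π) := by
      rw [← intervalIntegrable_iff_integrableOn_Ioc_of_le pi_pos.le]
      exact hcomp
    refine h1.congr_fun (fun x hx => ?_) measurableSet_Ioc
    rw [symDecRearr, abs_of_nonneg hx.1.le]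
  have hneg : IntegrableOn (symDecRearr f) (Ico (-π) (0:ℝ)) := by
    have h4 : IntervalIntegrable (symDecRearr f) volume 0 π := by
      rw [intervalIntegrable_iff_integrableOn_Ioc_of_le pi_pos.le]
      exact hpos
    have h3 := (IntervalIntegrable.iff_comp_neg enorm_ne_top).mp h4
    have h5 : (fun x => symDecRearr f (-x)) = symDecRearr f := by
      funext x
      rw [symDecRearr, symDecRearr, abs_neg]
    rw [h5] at h3
    have h2 : IntervalIntegrable (symDecRearr f) volume (-π) 0 := by
      simpa using h3.symm
    rw [intervalIntegrable_iff_integrableOn_Ico_of_le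
      (by linarith [pi_pos] : (-π:ℝ) ≤ 0)] at h2
    exact h2
  have hunion : IntegrableOn (symDecRearr f) (Ico (-π) (0:ℝ) ∪ Ioc (0:ℝ) π) :=
    hneg.union hpos
  refine hunion.mono_set_ae ?_
  have h0 : Icc (-π) π =ᵐ[volume] (Ico (-π) (0:ℝ) ∪ Ioc (0:ℝ) π : Set ℝ) := by
    have h1 : (Icc (-π) π : Set ℝ) \ (Ico (-π) (0:ℝ) ∪ Ioc (0:ℝ) π) ⊆ {(0:ℝ)} := by
      intro x hx
      obtain ⟨⟨hxa, hxb⟩, hxn⟩ := hx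
      simp only [mem_union, mem_Ico, mem_Ioc, not_or] at hxn
      obtain ⟨hn1, hn2⟩ := hxn
      have hx0 : 0 ≤ x := by
        by_contra hlt
        exact hn1 ⟨hxa, by linarith⟩
      have hx0' : x ≤ 0 := by
        by_contra hgt
        exact hn2 ⟨by linarith, hxb⟩
      simp [le_antisymm hx0' hx0]
    have h2 : (Ico (-π) (0:ℝ) ∪ Ioc (0:ℝ) π : Set ℝ) ⊆ Icc (-π) π := by
      rintro x (hx | hx)
      · exact ⟨hx.1, le_trans hx.2.le pi_pos.le⟩
      · exact ⟨le_trans (by linarith [pi_pos] : (-π:ℝ) ≤ 0) hx.1.le, hx.2⟩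
    have hnull : volume ((Icc (-π) π : Set ℝ) \ (Ico (-π) (0:ℝ) ∪ Ioc (0:ℝ) π)) = 0 :=
      measure_mono_null h1 (by simp)
    rw [Filter.eventuallyEq_set]
    filter_upwards [measure_eq_zero_iff_ae_notMem.mp hnull] with x hx
    exact ⟨fun hmem => by_contra fun hn => hx ⟨hmem, hn⟩, fun hmem => h2 hmem⟩
  exact h0.le  

/-! ### Formula for v -/

lemma weight_integrable {f : ℝ → ℝ} (hf : IntegrableOn f (Icc (-π) π))
    (hf0 : ∀ x ∈ Icc (-π) π, 0 ≤ f x) (c : ℝ) :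
    IntervalIntegrable (fun t => decRearr f t * ((2 * π - max c t) / 4)) volume 0 (2 * π) := by
  rw [intervalIntegrable_iff_integrableOn_Ioc_of_le (by positivity)]
  have hbase : IntegrableOn (decRearr f) (Ioc (0:ℝ) (2 * π)) :=
    (fstar_integrableOn hf hf0).congr_set_ae Ioo_ae_eq_Ioc.symm
  have hw : Continuous (fun t : ℝ => (2 * π - max c t) / 4) := by fun_prop
  have hbound : ∀ᵐ t ∂(volume.restrict (Ioc (0:ℝ) (2 * π))),
      ‖(2 * π - max c t) / 4‖ ≤ (4 * π + |c|) / 4 := by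
    refine (ae_restrict_iff' measurableSet_Ioc).mpr (ae_of_all _ fun t ht => ?_)
    rw [Real.norm_eq_abs, abs_div, abs_of_pos (by norm_num : (0:ℝ) < 4),
      div_le_div_iff_of_pos_right (by norm_num : (0:ℝ) < 4)]
    rcases le_total c t with h | h
    · rw [max_eq_right h, abs_le]
      constructor
      · nlinarith [ht.1, ht.2, abs_nonneg c, pi_pos]
      · nlinarith [ht.1, ht.2, abs_nonneg c, pi_pos]
    · rw [max_eq_left h, abs_le]
      constructor
      · nlinarith [le_abs_self c, neg_abs_le c, pi_pos]
      · nlinarith [le_abs_self c, neg_abs_le c, pi_pos]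
  have h1 : IntegrableOn (fun t => ((2 * π - max c t) / 4) * decRearr f t)
      (Ioc (0:ℝ) (2 * π)) :=
    Integrable.bdd_mul hbase hw.aestronglyMeasurable hbound
  exact h1.congr (ae_of_all _ fun t => mul_comm _ _)

lemma vform {f : ℝ → ℝ} (hf : IntegrableOn f (Icc (-π) π))
    (hf0 : ∀ x ∈ Icc (-π) π, 0 ≤ f x) {v v' : ℝ → ℝ}
    (hv : DirichletSol (symDecRearr f) v v') {y : ℝ} (hy : y ∈ Icc (-π) π) :
    v y = ∫ t in (0:ℝ)..(2 * π), decRearr f t * ((2 * π - max (2 * |y|) t) / 4) := by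
  have hππ : -π ≤ π := by linarith [pi_pos]
  have hsint := symDecRearr_integrableOn hf hf0
  have h1 : v y = ∫ s in (-π)..π, Gker y s * symDecRearr f s := by
    rw [rep hsint hv hy, intervalIntegral.integral_of_le hππ, ← integral_Icc_eq_integral_Ioc]
  have hint : ∀ c d, c ∈ Icc (-π) π → d ∈ Icc (-π) π →
      IntervalIntegrable (fun s => Gker y s * symDecRearr f s) volume c d := by
    intro c d hc hd
    rw [intervalIntegrable_iff]
    exact (cont_mul_integrable hsint (Gker_continuous y)).mono_set
      (uIoc_subset_uIcc.trans (uIcc_subset_Icc hc hd))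
  have h0mem : (0:ℝ) ∈ Icc (-π) π := ⟨by linarith [pi_pos], pi_pos.le⟩
  have hsplit : v y = (∫ s in (-π)..(0:ℝ), Gker y s * symDecRearr f s)
      + ∫ s in (0:ℝ)..π, Gker y s * symDecRearr f s := by
    rw [h1, intervalIntegral.integral_add_adjacent_intervals
      (hint _ _ ⟨le_rfl, hππ⟩ h0mem) (hint _ _ h0mem ⟨hππ, le_rfl⟩)]
  have hreflint : IntervalIntegrable (fun s => Gker y (-s) * symDecRearr f s) volume 0 π := by
    have h3 := (IntervalIntegrable.iff_comp_neg enorm_ne_top).mp (hint _ _ ⟨le_rfl, hππ⟩ h0mem)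
    have h4 : (fun s => (fun z => Gker y z * symDecRearr f z) (-s))
        = fun s => Gker y (-s) * symDecRearr f s := by
      funext s
      simp only
      rw [symDecRearr, symDecRearr, abs_neg]
    rw [h4] at h3
    simpa using h3.symm
  have hrefl : (∫ s in (-π)..(0:ℝ), Gker y s * symDecRearr f s)
      = ∫ s in (0:ℝ)..π, Gker y (-s) * symDecRearr f s := by
    have h2 : (∫ s in (0:ℝ)..π, Gker y (-s) * symDecRearr f s)
        = ∫ s in (0:ℝ)..π, (fun z => Gker y z * symDecRearr f z) (-s) := by
      refine intervalIntegral.integral_congr fun s _ => ?_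
      simp only
      rw [symDecRearr, symDecRearr, abs_neg]
    have h3 := intervalIntegral.integral_comp_neg (a := 0) (b := π)
      (fun z => Gker y z * symDecRearr f z)
    rw [h2, h3]
    norm_num
  have hcomb : v y = ∫ s in (0:ℝ)..π, (π - max |y| s) * symDecRearr f s := by
    rw [hsplit, hrefl, ← intervalIntegral.integral_add hreflint (hint _ _ h0mem ⟨hππ, le_rfl⟩)]
    refine intervalIntegral.integral_congr fun s hs => ?_
    rw [show Gker y (-s) * symDecRearr f s + Gker y s * symDecRearr f s
        = (Gker y s + Gker y (-s)) * symDecRearr f s from by ring, Gker_add_neg]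
    rw [uIcc_of_le pi_pos.le] at hs
    rw [abs_of_nonneg hs.1]
  have hg2 : (∫ s in (0:ℝ)..π, (π - max |y| s) * symDecRearr f s)
      = ∫ s in (0:ℝ)..π, (fun t => (π - max |y| (t / 2)) * decRearr f t) (2 * s) := by
    refine intervalIntegral.integral_congr fun s hs => ?_
    rw [uIcc_of_le pi_pos.le] at hs
    simp only
    rw [symDecRearr, abs_of_nonneg hs.1]
    norm_num
  have hg3 := intervalIntegral.integral_comp_mul_left
    (a := 0) (b := π) (c := 2) (fun t => (π - max |y| (t / 2)) * decRearr f t) two_ne_zero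
  rw [hcomb, hg2, hg3]
  rw [show (2:ℝ) * 0 = 0 from by ring]
  rw [smul_eq_mul, ← intervalIntegral.integral_const_mul]
  refine intervalIntegral.integral_congr fun t _ => ?_
  have hmax : max (2 * |y|) t = 2 * max |y| (t / 2) := by
    rcases le_total |y| (t / 2) with h | h
    · rw [max_eq_right h, max_eq_right (by linarith)]
      ring
    · rw [max_eq_left h, max_eq_left (by linarith)]
  rw [hmax]
  ring

lemma v_nonneg {f : ℝ → ℝ} (hf : IntegrableOn f (Icc (-π) π))
    (hf0 : ∀ x ∈ Icc (-π) π, 0 ≤ f x) {v v' : ℝ → ℝ}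
    (hv : DirichletSol (symDecRearr f) v v') {y : ℝ} (hy : y ∈ Icc (-π) π) :
    0 ≤ v y := by
  rw [vform hf hf0 hv hy]
  refine intervalIntegral.integral_nonneg (by positivity) fun t ht => ?_
  refine mul_nonneg (decRearr_nonneg hf0 t) (div_nonneg ?_ (by norm_num))
  have h1 : |y| ≤ π := abs_le.mpr ⟨hy.1, hy.2⟩
  rcases le_total (2 * |y|) t with h | h
  · rw [max_eq_right h]
    linarith [ht.2]
  · rw [max_eq_left h]
    linarith

lemma v_mono {f : ℝ → ℝ} (hf : IntegrableOn f (Icc (-π) π))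
    (hf0 : ∀ x ∈ Icc (-π) π, 0 ≤ f x) {v v' : ℝ → ℝ}
    (hv : DirichletSol (symDecRearr f) v v') {y z : ℝ} (hy : y ∈ Icc (-π) π)
    (hz : z ∈ Icc (-π) π) (hyz : |y| ≤ |z|) : v z ≤ v y := by
  rw [vform hf hf0 hv hy, vform hf hf0 hv hz]
  refine intervalIntegral.integral_mono_on (by positivity)
    (weight_integrable hf hf0 (2 * |z|)) (weight_integrable hf hf0 (2 * |y|))
    fun t ht => ?_
  refine mul_le_mul_of_nonneg_left ?_ (decRearr_nonneg hf0 t)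
  have h1 : max (2 * |y|) t ≤ max (2 * |z|) t :=
    max_le_max (by linarith) le_rfl
  have h2 : 2 * π - max (2 * |z|) t ≤ 2 * π - max (2 * |y|) t := by linarith
  linarith

/-! ### Tent estimates -/

lemma tent1 {a b s : ℝ} (ha : a ∈ Ioo (-π) π) (hb : b ∈ Ioo (-π) π) (hab : a ≤ b)
    (hs : s ∈ Icc (-π) π) :
    (π - b) * Gker a s + (a + π) * Gker b s ≤ (π - b) * (s + π) := by
  obtain ⟨ha1, ha2⟩ := ha
  obtain ⟨hb1, hb2⟩ := hb
  obtain ⟨hs1, hs2⟩ := hs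
  have h2π : (0:ℝ) < 2 * π := by positivity
  rcases le_total s a with h | h
  · have ea : Gker a s = (π + s) * (π - a) / (2 * π) := by
      rw [Gker, min_eq_right h, max_eq_left h]
    have eb : Gker b s = (π + s) * (π - b) / (2 * π) := by
      rw [Gker, min_eq_right (le_trans h hab), max_eq_left (le_trans h hab)]
    rw [ea, eb]
    rw [show (π - b) * ((π + s) * (π - a) / (2 * π)) + (a + π) * ((π + s) * (π - b) / (2 * π))
        = ((π - b) * ((π + s) * (π - a)) + (a + π) * ((π + s) * (π - b))) / (2 * π) from by
      ring, div_le_iff₀ h2π]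
    nlinarith [h2π.le]
  · rcases le_total s b with h' | h'
    · have ea : Gker a s = (π + a) * (π - s) / (2 * π) := by
        rw [Gker, min_eq_left h, max_eq_right h]
      have eb : Gker b s = (π + s) * (π - b) / (2 * π) := by
        rw [Gker, min_eq_right h', max_eq_left h']
      rw [ea, eb]
      rw [show (π - b) * ((π + a) * (π - s) / (2 * π)) + (a + π) * ((π + s) * (π - b) / (2 * π))
          = ((π - b) * ((π + a) * (π - s)) + (a + π) * ((π + s) * (π - b))) / (2 * π) from by
        ring, div_le_iff₀ h2π]
      nlinarith [mul_nonneg (mul_nonneg h2π.le (by linarith : (0:ℝ) ≤ π - b))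
        (by linarith : (0:ℝ) ≤ s - a)]
    · have ea : Gker a s = (π + a) * (π - s) / (2 * π) := by
        rw [Gker, min_eq_left h, max_eq_right h]
      have eb : Gker b s = (π + b) * (π - s) / (2 * π) := by
        rw [Gker, min_eq_left h', max_eq_right h']
      rw [ea, eb]
      rw [show (π - b) * ((π + a) * (π - s) / (2 * π)) + (a + π) * ((π + b) * (π - s) / (2 * π))
          = ((π - b) * ((π + a) * (π - s)) + (a + π) * ((π + b) * (π - s))) / (2 * π) from by
        ring, div_le_iff₀ h2π]
      nlinarith [h2π.le,
        mul_le_mul_of_nonneg_right (by linarith : π - s ≤ π - b) (by linarith : (0:ℝ) ≤ π + a),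
        mul_le_mul_of_nonneg_left (by linarith : π + a ≤ π + s) (by linarith : (0:ℝ) ≤ π - b)]

lemma tent2 {a b s : ℝ} (ha : a ∈ Ioo (-π) π) (hb : b ∈ Ioo (-π) π) (hab : a ≤ b)
    (hs : s ∈ Icc (-π) π) :
    (π - b) * Gker a s + (a + π) * Gker b s ≤ (a + π) * (π - s) := by
  obtain ⟨ha1, ha2⟩ := ha
  obtain ⟨hb1, hb2⟩ := hb
  obtain ⟨hs1, hs2⟩ := hs
  have h2π : (0:ℝ) < 2 * π := by positivity
  rcases le_total s a with h | h
  · have ea : Gker a s = (π + s) * (π - a) / (2 * π) := by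
      rw [Gker, min_eq_right h, max_eq_left h]
    have eb : Gker b s = (π + s) * (π - b) / (2 * π) := by
      rw [Gker, min_eq_right (le_trans h hab), max_eq_left (le_trans h hab)]
    rw [ea, eb]
    rw [show (π - b) * ((π + s) * (π - a) / (2 * π)) + (a + π) * ((π + s) * (π - b) / (2 * π))
        = ((π - b) * ((π + s) * (π - a)) + (a + π) * ((π + s) * (π - b))) / (2 * π) from by
      ring, div_le_iff₀ h2π]
    nlinarith [h2π.le,
      mul_le_mul_of_nonneg_right (by linarith : π + s ≤ π + a) (by linarith : (0:ℝ) ≤ π - b),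
      mul_le_mul_of_nonneg_left (by linarith : π - b ≤ π - s) (by linarith : (0:ℝ) ≤ π + a)]
  · rcases le_total s b with h' | h'
    · have ea : Gker a s = (π + a) * (π - s) / (2 * π) := by
        rw [Gker, min_eq_left h, max_eq_right h]
      have eb : Gker b s = (π + s) * (π - b) / (2 * π) := by
        rw [Gker, min_eq_right h', max_eq_left h']
      rw [ea, eb]
      rw [show (π - b) * ((π + a) * (π - s) / (2 * π)) + (a + π) * ((π + s) * (π - b) / (2 * π))
          = ((π - b) * ((π + a) * (π - s)) + (a + π) * ((π + s) * (π - b))) / (2 * π) from by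
        ring, div_le_iff₀ h2π]
      nlinarith [mul_nonneg (mul_nonneg h2π.le (by linarith : (0:ℝ) ≤ π + a))
        (by linarith : (0:ℝ) ≤ b - s)]
    · have ea : Gker a s = (π + a) * (π - s) / (2 * π) := by
        rw [Gker, min_eq_left h, max_eq_right h]
      have eb : Gker b s = (π + b) * (π - s) / (2 * π) := by
        rw [Gker, min_eq_left h', max_eq_right h']
      rw [ea, eb]
      rw [show (π - b) * ((π + a) * (π - s) / (2 * π)) + (a + π) * ((π + b) * (π - s) / (2 * π))
          = ((π - b) * ((π + a) * (π - s)) + (a + π) * ((π + b) * (π - s))) / (2 * π) from by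
        ring, div_le_iff₀ h2π]
      nlinarith [h2π.le]

lemma tent3 {a b s : ℝ} (ha : a ∈ Ioo (-π) π) (hb : b ∈ Ioo (-π) π) (hab : a ≤ b)
    (hs : s ∈ Icc (-π) π) :
    (π - b) * Gker a s + (a + π) * Gker b s ≤ (a + π) * (π - b) := by
  obtain ⟨ha1, ha2⟩ := ha
  obtain ⟨hb1, hb2⟩ := hb
  obtain ⟨hs1, hs2⟩ := hs
  have h2π : (0:ℝ) < 2 * π := by positivity
  rcases le_total s a with h | h
  · have ea : Gker a s = (π + s) * (π - a) / (2 * π) := by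
      rw [Gker, min_eq_right h, max_eq_left h]
    have eb : Gker b s = (π + s) * (π - b) / (2 * π) := by
      rw [Gker, min_eq_right (le_trans h hab), max_eq_left (le_trans h hab)]
    rw [ea, eb]
    rw [show (π - b) * ((π + s) * (π - a) / (2 * π)) + (a + π) * ((π + s) * (π - b) / (2 * π))
        = ((π - b) * ((π + s) * (π - a)) + (a + π) * ((π + s) * (π - b))) / (2 * π) from by
      ring, div_le_iff₀ h2π]
    nlinarith [mul_nonneg (mul_nonneg h2π.le (by linarith : (0:ℝ) ≤ π - b))
      (by linarith : (0:ℝ) ≤ a - s)]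
  · rcases le_total s b with h' | h'
    · have ea : Gker a s = (π + a) * (π - s) / (2 * π) := by
        rw [Gker, min_eq_left h, max_eq_right h]
      have eb : Gker b s = (π + s) * (π - b) / (2 * π) := by
        rw [Gker, min_eq_right h', max_eq_left h']
      rw [ea, eb]
      rw [show (π - b) * ((π + a) * (π - s) / (2 * π)) + (a + π) * ((π + s) * (π - b) / (2 * π))
          = ((π - b) * ((π + a) * (π - s)) + (a + π) * ((π + s) * (π - b))) / (2 * π) from by
        ring, div_le_iff₀ h2π]
      nlinarith [h2π.le]
    · have ea : Gker a s = (π + a) * (π - s) / (2 * π) := by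
        rw [Gker, min_eq_left h, max_eq_right h]
      have eb : Gker b s = (π + b) * (π - s) / (2 * π) := by
        rw [Gker, min_eq_left h', max_eq_right h']
      rw [ea, eb]
      rw [show (π - b) * ((π + a) * (π - s) / (2 * π)) + (a + π) * ((π + b) * (π - s) / (2 * π))
          = ((π - b) * ((π + a) * (π - s)) + (a + π) * ((π + b) * (π - s))) / (2 * π) from by
        ring, div_le_iff₀ h2π]
      nlinarith [mul_nonneg (mul_nonneg h2π.le (by linarith : (0:ℝ) ≤ π + a))
        (by linarith : (0:ℝ) ≤ s - b)]

/-! ### The master inequality -/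

set_option maxHeartbeats 2000000 in
lemma master {f u u' v v' : ℝ → ℝ} (hf : IntegrableOn f (Icc (-π) π))
    (hf0 : ∀ x ∈ Icc (-π) π, 0 ≤ f x) (hu : DirichletSol f u u')
    (hv : DirichletSol (symDecRearr f) v v') {a b : ℝ}
    (ha : a ∈ Ioo (-π) π) (hb : b ∈ Ioo (-π) π) (hab : a ≤ b) :
    ((π - b) * u a + (a + π) * u b) / (2 * π - (b - a)) ≤ v ((b - a) / 2) := by
  obtain ⟨ha1, ha2⟩ := ha
  obtain ⟨hb1, hb2⟩ := hb
  have hπ := pi_pos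
  set α' := a + π with hα'
  set β' := π - b with hβ'
  have hα : 0 < α' := by rw [hα']; linarith
  have hβ : 0 < β' := by rw [hβ']; linarith
  set N := 2 * π - (b - a) with hN0
  have hNeq : N = α' + β' := by rw [hα', hβ', hN0]; ring
  have hN : 0 < N := by rw [hNeq]; linarith
  set m := b - a with hm0
  have hm : 0 ≤ m := by rw [hm0]; linarith
  have hm2 : m < 2 * π := by rw [hm0]; linarith
  have hmhalf : m / 2 ∈ Icc (-π) π := ⟨by linarith, by linarith⟩
  set κ := N ^ 2 / (α' * β') with hκ0
  have hκpos : 0 < κ := by rw [hκ0]; positivity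
  have hκ4 : 4 ≤ κ := by
    rw [hκ0, le_div_iff₀ (by positivity)]
    rw [hNeq]
    nlinarith [sq_nonneg (α' - β')]
  set hmax := α' * β' / N with hhm
  have hmaxpos : 0 < hmax := by rw [hhm]; positivity
  have hmaxle : hmax ≤ (2 * π - m) / 4 := by
    have hNm : N = 2 * π - m := by rw [hN0, hm0]
    rw [hhm, ← hNm, div_le_div_iff₀ hN (by norm_num)]
    rw [hNeq]
    nlinarith [sq_nonneg (α' - β')]
  set Ψ := fun s => (β' * Gker a s + α' * Gker b s) / N with hΨ
  have hΨcont : Continuous Ψ := by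
    rw [hΨ]
    exact ((continuous_const.mul (Gker_continuous a)).add
      (continuous_const.mul (Gker_continuous b))).div_const N
  have hΨ0 : ∀ s ∈ Icc (-π) π, 0 ≤ Ψ s := fun s hs => by
    rw [hΨ]
    exact div_nonneg (add_nonneg (mul_nonneg hβ.le (Gker_nonneg ⟨ha1.le, ha2.le⟩ hs))
      (mul_nonneg hα.le (Gker_nonneg ⟨hb1.le, hb2.le⟩ hs))) hN.le
  -- step 0: LHS as an integral
  have hLHS : (β' * u a + α' * u b) / N = ∫ s in Icc (-π) π, Ψ s * f s := by
    rw [rep hf hu ⟨ha1.le, ha2.le⟩, rep hf hu ⟨hb1.le, hb2.le⟩]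
    have i1 : IntegrableOn (fun s => β' * (Gker a s * f s)) (Icc (-π) π) :=
      (cont_mul_integrable hf (Gker_continuous a)).const_mul β'
    have i2 : IntegrableOn (fun s => α' * (Gker b s * f s)) (Icc (-π) π) :=
      (cont_mul_integrable hf (Gker_continuous b)).const_mul α'
    rw [← integral_const_mul, ← integral_const_mul,
      ← integral_add i1 i2, ← integral_div]
    refine setIntegral_congr_fun measurableSet_Icc fun s _ => ?_
    rw [hΨ]
    ring
  set μI := volume.restrict (Icc (-π) π) with hμI
  have hμΨnn : ∀ᵐ s ∂μI, 0 ≤ Ψ s :=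
    (ae_restrict_iff' measurableSet_Icc).mpr (ae_of_all _ hΨ0)
  have hA1 : ∫ s in Icc (-π) π, Ψ s * f s
      = (∫⁻ s in Icc (-π) π, ENNReal.ofReal (Ψ s * f s)).toReal := by
    rw [integral_eq_lintegral_of_nonneg_ae]
    · exact (ae_restrict_iff' measurableSet_Icc).mpr
        (ae_of_all _ fun s hs => mul_nonneg (hΨ0 s hs) (hf0 s hs))
    · exact hΨcont.aestronglyMeasurable.mul hf.aestronglyMeasurable
  have hA2 : ∫⁻ s in Icc (-π) π, ENNReal.ofReal (Ψ s * f s)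
      = ∫⁻ s in Icc (-π) π, ENNReal.ofReal (Ψ s) * ENNReal.ofReal (f s) :=
    setLIntegral_congr_fun_ae measurableSet_Icc
      (ae_of_all _ fun s hs => ENNReal.ofReal_mul (hΨ0 s hs))
  set ρ := μI.withDensity (fun s => ENNReal.ofReal (f s)) with hρ
  have hfmeas : AEMeasurable (fun s => ENNReal.ofReal (f s)) μI :=
    ENNReal.measurable_ofReal.comp_aemeasurable hf.aestronglyMeasurable.aemeasurable
  have hΨmeasE : AEMeasurable (fun s => ENNReal.ofReal (Ψ s)) μI :=
    (ENNReal.measurable_ofReal.comp hΨcont.measurable).aemeasurable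
  have hA3 : ∫⁻ s, ENNReal.ofReal (Ψ s) ∂ρ
      = ∫⁻ s in Icc (-π) π, ENNReal.ofReal (Ψ s) * ENNReal.ofReal (f s) := by
    rw [hρ, lintegral_withDensity_eq_lintegral_mul₀ hfmeas hΨmeasE]
    exact lintegral_congr fun s => by simp only [Pi.mul_apply]; rw [mul_comm]
  have hlayer : ∫⁻ s, ENNReal.ofReal (Ψ s) ∂ρ = ∫⁻ lam in Ioi (0:ℝ), ρ {s | lam < Ψ s} :=
    lintegral_eq_lintegral_meas_lt ρ
      (Filter.Eventually.filter_mono (withDensity_absolutelyContinuous μI _).ae_le hμΨnn)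
      (hΨcont.measurable.aemeasurable)
  -- step 1: pointwise bound on level measures
  have hper : ∀ lam ∈ Ioi (0:ℝ), ρ {s | lam < Ψ s}
      ≤ Set.indicator (Iio hmax)
        (fun l => ∫⁻ t in Ioo (0:ℝ) (2 * π - κ * l), fstarE f t) lam := by
    intro lam hlam
    rw [mem_Ioi] at hlam
    have hopen : MeasurableSet {s | lam < Ψ s} :=
      (isOpen_lt continuous_const hΨcont).measurableSet
    rw [hρ, hμI, withDensity_apply _ hopen, Measure.restrict_restrict hopen]
    by_cases hcase : lam < hmax
    · rw [Set.indicator_of_mem (mem_Iio.mpr hcase)]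
      refine hl_set hf hf0 (hopen.inter measurableSet_Icc) inter_subset_right ?_
      have hsub : {s | lam < Ψ s} ∩ Icc (-π) π
          ⊆ Ioo (lam * N / β' - π) (π - lam * N / α') := by
        rintro s ⟨hsl, hsI⟩
        rw [mem_setOf_eq] at hsl
        have t1 := tent1 ⟨ha1, ha2⟩ ⟨hb1, hb2⟩ hab hsI
        have t2 := tent2 ⟨ha1, ha2⟩ ⟨hb1, hb2⟩ hab hsI
        have hΨle1 : Ψ s ≤ β' * (s + π) / N := by
          rw [hΨ]
          show (β' * Gker a s + α' * Gker b s) / N ≤ β' * (s + π) / N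
          gcongr
        have hΨle2 : Ψ s ≤ α' * (π - s) / N := by
          rw [hΨ]
          show (β' * Gker a s + α' * Gker b s) / N ≤ α' * (π - s) / N
          gcongr
        constructor
        · have h5 : lam * N < β' * (s + π) := by
            have h7 := lt_of_lt_of_le hsl hΨle1
            rw [lt_div_iff₀ hN] at h7
            linarith
          have h6 : lam * N / β' < s + π := by
            rw [div_lt_iff₀ hβ]
            linarith
          linarith
        · have h5 : lam * N < α' * (π - s) := by
            have h7 := lt_of_lt_of_le hsl hΨle2
            rw [lt_div_iff₀ hN] at h7
            linarith
          have h6 : lam * N / α' < π - s := by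
            rw [div_lt_iff₀ hα]
            linarith
          linarith
      refine le_trans (measure_mono hsub) ?_
      rw [Real.volume_Ioo]
      apply ENNReal.ofReal_le_ofReal
      have heq : (π - lam * N / α') - (lam * N / β' - π) = 2 * π - κ * lam := by
        rw [hκ0]
        field_simp
        rw [hNeq]
        ring
      rw [heq]
    · rw [Set.indicator_of_notMem (show lam ∉ Iio hmax from fun hmem => hcase (mem_Iio.mp hmem))]
      have hempty : {s | lam < Ψ s} ∩ Icc (-π) π = ∅ := by
        ext s
        simp only [mem_inter_iff, mem_setOf_eq, mem_empty_iff_false, iff_false, not_and]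
        intro hsl hsI
        have t3 := tent3 ⟨ha1, ha2⟩ ⟨hb1, hb2⟩ hab hsI
        have hΨle3 : Ψ s ≤ hmax := by
          rw [hΨ, hhm]
          show (β' * Gker a s + α' * Gker b s) / N ≤ α' * β' / N
          gcongr
        push_neg at hcase
        linarith
      rw [hempty]
      simp
  -- step 2: swap the double integral
  set S : Set (ℝ × ℝ) := {q : ℝ × ℝ | q.1 < hmax ∧ q.2 < 2 * π - κ * q.1} with hS
  have hSmeas : MeasurableSet S := by
    rw [hS]
    exact (measurableSet_lt measurable_fst measurable_const).inter
      (measurableSet_lt measurable_snd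
        (measurable_const.sub (measurable_const.mul measurable_fst)))
  set Φ : ℝ → ℝ → ℝ≥0∞ := fun lam t => Set.indicator S (fun q : ℝ × ℝ => fstarE f q.2) (lam, t)
    with hΦ
  have hΦmeas : Measurable (Function.uncurry Φ) := by
    have : Function.uncurry Φ = Set.indicator S (fun q : ℝ × ℝ => fstarE f q.2) := by
      funext p
      rfl
    rw [this]
    exact ((fstarE_meas hf hf0).comp measurable_snd).indicator hSmeas
  have hstepA : ∀ lam ∈ Ioi (0:ℝ),
      Set.indicator (Iio hmax)
        (fun l => ∫⁻ t in Ioo (0:ℝ) (2 * π - κ * l), fstarE f t) lam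
      = ∫⁻ t in Ioo (0:ℝ) (2 * π), Φ lam t := by
    intro lam hlam
    rw [mem_Ioi] at hlam
    by_cases hcase : lam < hmax
    · rw [Set.indicator_of_mem (mem_Iio.mpr hcase)]
      have h1 : (fun t => Φ lam t) = Set.indicator (Iio (2 * π - κ * lam)) (fstarE f) := by
        funext t
        rw [hΦ]
        simp only [Set.indicator_apply, hS, mem_setOf_eq, mem_Iio]
        by_cases h2 : t < 2 * π - κ * lam
        · rw [if_pos ⟨hcase, h2⟩, if_pos h2]
        · rw [if_neg (fun h3 => h2 h3.2), if_neg h2]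
      rw [h1, lintegral_indicator measurableSet_Iio, Measure.restrict_restrict measurableSet_Iio]
      have h2 : Iio (2 * π - κ * lam) ∩ Ioo (0:ℝ) (2 * π) = Ioo (0:ℝ) (2 * π - κ * lam) := by
        ext t
        simp only [mem_inter_iff, mem_Iio, mem_Ioo]
        constructor
        · rintro ⟨h3, h4, h5⟩
          exact ⟨h4, h3⟩
        · rintro ⟨h4, h3⟩
          refine ⟨h3, h4, ?_⟩
          nlinarith [hκpos, hlam]
      rw [h2]
    · rw [Set.indicator_of_notMem (show lam ∉ Iio hmax from fun hmem => hcase (mem_Iio.mp hmem))]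
      have h1 : (fun t => Φ lam t) = fun _ => (0:ℝ≥0∞) := by
        funext t
        rw [hΦ]
        simp only [Set.indicator_apply, hS, mem_setOf_eq]
        rw [if_neg (fun h3 => hcase h3.1)]
      rw [h1]
      simp
  have hstepB : ∀ t ∈ Ioo (0:ℝ) (2 * π),
      (∫⁻ lam in Ioi (0:ℝ), Φ lam t)
      ≤ fstarE f t * ENNReal.ofReal ((2 * π - max m t) / 4) := by
    intro t ht
    have h1 : (fun lam => Φ lam t)
        = Set.indicator (Iio (min hmax ((2 * π - t) / κ))) (fun _ => fstarE f t) := by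
      funext lam
      rw [hΦ]
      simp only [Set.indicator_apply, hS, mem_setOf_eq, mem_Iio, lt_min_iff]
      have h2 : (t < 2 * π - κ * lam) ↔ (lam < (2 * π - t) / κ) := by
        rw [lt_div_iff₀ hκpos]
        constructor <;> intro h3 <;> nlinarith
      by_cases h3 : lam < hmax ∧ t < 2 * π - κ * lam
      · rw [if_pos h3, if_pos ⟨h3.1, h2.mp h3.2⟩]
      · rw [if_neg h3, if_neg (fun h4 => h3 ⟨h4.1, h2.mpr h4.2⟩)]
    rw [h1, lintegral_indicator measurableSet_Iio, setLIntegral_const,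
      Measure.restrict_apply' measurableSet_Ioi]
    have h2 : Iio (min hmax ((2 * π - t) / κ)) ∩ Ioi (0:ℝ)
        = Ioo (0:ℝ) (min hmax ((2 * π - t) / κ)) := by
      rw [inter_comm, Ioi_inter_Iio]
    rw [h2, Real.volume_Ioo, sub_zero]
    refine mul_le_mul_right (ENNReal.ofReal_le_ofReal ?_) _
    rcases le_total t m with hc | hc
    · rw [max_eq_left hc]
      exact le_trans (min_le_left _ _) hmaxle
    · rw [max_eq_right hc]
      refine le_trans (min_le_right _ _) ?_
      have h3 : 0 ≤ 2 * π - t := by linarith [ht.2]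
      gcongr
  have hmid : (∫⁻ lam in Ioi (0:ℝ), Set.indicator (Iio hmax)
        (fun l => ∫⁻ t in Ioo (0:ℝ) (2 * π - κ * l), fstarE f t) lam)
      ≤ ∫⁻ t in Ioo (0:ℝ) (2 * π), fstarE f t * ENNReal.ofReal ((2 * π - max m t) / 4) := by
    have hswap : (∫⁻ lam in Ioi (0:ℝ), ∫⁻ t in Ioo (0:ℝ) (2 * π), Φ lam t)
        = ∫⁻ t in Ioo (0:ℝ) (2 * π), ∫⁻ lam in Ioi (0:ℝ), Φ lam t :=
      lintegral_lintegral_swap hΦmeas.aemeasurable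
    calc (∫⁻ lam in Ioi (0:ℝ), Set.indicator (Iio hmax)
          (fun l => ∫⁻ t in Ioo (0:ℝ) (2 * π - κ * l), fstarE f t) lam)
        = ∫⁻ lam in Ioi (0:ℝ), ∫⁻ t in Ioo (0:ℝ) (2 * π), Φ lam t :=
          setLIntegral_congr_fun_ae measurableSet_Ioi (ae_of_all _ hstepA)
      _ = ∫⁻ t in Ioo (0:ℝ) (2 * π), ∫⁻ lam in Ioi (0:ℝ), Φ lam t := hswap
      _ ≤ ∫⁻ t in Ioo (0:ℝ) (2 * π), fstarE f t * ENNReal.ofReal ((2 * π - max m t) / 4) :=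
          lintegral_mono_ae
          ((ae_restrict_iff' measurableSet_Ioo).mpr (ae_of_all _ hstepB))
  -- step 3: identify the right-hand side with v (m/2)
  have hvval : (∫⁻ t in Ioo (0:ℝ) (2 * π),
        fstarE f t * ENNReal.ofReal ((2 * π - max m t) / 4))
      = ENNReal.ofReal (v (m / 2)) := by
    have hvf := vform hf hf0 hv hmhalf
    have habs : 2 * |m / 2| = m := by
      rw [abs_of_nonneg (by linarith : (0:ℝ) ≤ m / 2)]
      ring
    rw [habs] at hvf
    have hIcongr : (∫ t in (0:ℝ)..(2 * π), decRearr f t * ((2 * π - max m t) / 4))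
        = ∫ t in Ioo (0:ℝ) (2 * π), decRearr f t * ((2 * π - max m t) / 4) := by
      rw [intervalIntegral.integral_of_le (by positivity), ← integral_Ioc_eq_integral_Ioo]
    have hInt : IntegrableOn (fun t => decRearr f t * ((2 * π - max m t) / 4))
        (Ioo (0:ℝ) (2 * π)) := by
      have h4 := weight_integrable hf hf0 m
      rw [intervalIntegrable_iff_integrableOn_Ioc_of_le (by positivity)] at h4
      exact h4.congr_set_ae Ioo_ae_eq_Ioc
    have hnn : 0 ≤ᵐ[volume.restrict (Ioo (0:ℝ) (2 * π))]
        fun t => decRearr f t * ((2 * π - max m t) / 4) := by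
      refine (ae_restrict_iff' measurableSet_Ioo).mpr (ae_of_all _ fun t ht => ?_)
      refine mul_nonneg (decRearr_nonneg hf0 t) (div_nonneg ?_ (by norm_num))
      rcases le_total m t with h | h
      · rw [max_eq_right h]; linarith [ht.2]
      · rw [max_eq_left h]; linarith
    rw [hvf, hIcongr, ofReal_integral_eq_lintegral_ofReal hInt hnn]
    refine setLIntegral_congr_fun_ae measurableSet_Ioo (ae_of_all _ fun t ht => ?_)
    rw [ENNReal.ofReal_mul (decRearr_nonneg hf0 t), fstarE_eq f ht.1]
  -- step 4: combine
  have hchain : (∫⁻ s in Icc (-π) π, ENNReal.ofReal (Ψ s * f s))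
      ≤ ENNReal.ofReal (v (m / 2)) := by
    rw [hA2, ← hA3, hlayer]
    calc (∫⁻ lam in Ioi (0:ℝ), ρ {s | lam < Ψ s})
        ≤ ∫⁻ lam in Ioi (0:ℝ), Set.indicator (Iio hmax)
            (fun l => ∫⁻ t in Ioo (0:ℝ) (2 * π - κ * l), fstarE f t) lam :=
          lintegral_mono_ae
            ((ae_restrict_iff' measurableSet_Ioi).mpr (ae_of_all _ hper))
      _ ≤ ∫⁻ t in Ioo (0:ℝ) (2 * π),
            fstarE f t * ENNReal.ofReal ((2 * π - max m t) / 4) := hmid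
      _ = ENNReal.ofReal (v (m / 2)) := hvval
  show (β' * u a + α' * u b) / N ≤ v (m / 2)
  rw [hLHS, hA1]
  calc (∫⁻ s in Icc (-π) π, ENNReal.ofReal (Ψ s * f s)).toReal
      ≤ (ENNReal.ofReal (v (m / 2))).toReal :=
        ENNReal.toReal_mono ENNReal.ofReal_ne_top hchain
    _ = v (m / 2) := ENNReal.toReal_ofReal (v_nonneg hf hf0 hv hmhalf)

/-! ### Level set comparison -/

lemma u_cont {f u u' : ℝ → ℝ} (hu : DirichletSol f u u') :
    ContinuousOn u (Icc (-π) π) :=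
  fun x hx => ((hu.1 x hx).continuousWithinAt)

lemma level {f u u' v v' : ℝ → ℝ} (hf : IntegrableOn f (Icc (-π) π))
    (hf0 : ∀ x ∈ Icc (-π) π, 0 ≤ f x) (hu : DirichletSol f u u')
    (hv : DirichletSol (symDecRearr f) v v') {c : ℝ} (hc : 0 < c) :
    volume ({x | c ≤ u x} ∩ Icc (-π) π) ≤ volume ({x | c ≤ v x} ∩ Icc (-π) π) := by
  have hπ := pi_pos
  set S := {x | c ≤ u x} ∩ Icc (-π) π with hS
  rcases eq_empty_or_nonempty S with hemp | hne
  · rw [hemp]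
    simp
  · have hSclosed : IsClosed S := by
      rw [hS, inter_comm]
      exact ContinuousOn.preimage_isClosed_of_isClosed (u_cont hu) isClosed_Icc isClosed_Ici
    have hScomp : IsCompact S :=
      isCompact_Icc.of_isClosed_subset hSclosed (by rw [hS]; exact inter_subset_right)
    set a := sInf S with ha0
    set b := sSup S with hb0
    have haS : a ∈ S := hScomp.sInf_mem hne
    have hbS : b ∈ S := hScomp.sSup_mem hne
    have hab : a ≤ b := csInf_le_csSup hne hScomp.bddBelow hScomp.bddAbove
    obtain ⟨hua, haI⟩ := haS
    obtain ⟨hub, hbI⟩ := hbS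
    rw [mem_setOf_eq] at hua hub
    have hu0a : u (-π) = 0 := hu.2.2.2.1
    have hu0b : u π = 0 := hu.2.2.2.2
    have haIoo : a ∈ Ioo (-π) π := by
      constructor
      · rcases lt_or_eq_of_le haI.1 with h | h
        · exact h
        · exfalso; rw [← h, hu0a] at hua; linarith
      · rcases lt_or_eq_of_le haI.2 with h | h
        · exact h
        · exfalso; rw [h, hu0b] at hua; linarith
    have hbIoo : b ∈ Ioo (-π) π := by
      constructor
      · rcases lt_or_eq_of_le hbI.1 with h | h
        · exact h
        · exfalso; rw [← h, hu0a] at hub; linarith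
      · rcases lt_or_eq_of_le hbI.2 with h | h
        · exact h
        · exfalso; rw [h, hu0b] at hub; linarith
    have hkey := master hf hf0 hu hv haIoo hbIoo hab
    have hN : (0:ℝ) < 2 * π - (b - a) := by
      have := haIoo.1
      have := hbIoo.2
      linarith
    have hc2 : c ≤ ((π - b) * u a + (a + π) * u b) / (2 * π - (b - a)) := by
      rw [le_div_iff₀ hN]
      have h1 : (π - b) * c ≤ (π - b) * u a :=
        mul_le_mul_of_nonneg_left hua (by linarith [hbIoo.2])
      have h2 : (a + π) * c ≤ (a + π) * u b :=
        mul_le_mul_of_nonneg_left hub (by linarith [haIoo.1])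
      have h3 : c * (2 * π - (b - a)) = (π - b) * c + (a + π) * c := by ring
      rw [h3]
      linarith
    have hcv : c ≤ v ((b - a) / 2) := le_trans hc2 hkey
    have hhalfI : (b - a) / 2 ∈ Icc (-π) π := by
      constructor
      · have := haIoo.1; have := hbIoo.2; linarith
      · have := haIoo.1; have := hbIoo.2; linarith
    have hsubT : Icc (-((b - a) / 2)) ((b - a) / 2) ⊆ {x | c ≤ v x} ∩ Icc (-π) π := by
      intro x hx
      have hx1 : |x| ≤ (b - a) / 2 := abs_le.mpr ⟨hx.1, hx.2⟩
      have hxI : x ∈ Icc (-π) π := by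
        constructor
        · have := neg_abs_le x
          have := haIoo.1; have := hbIoo.2
          linarith [hx1]
        · have := le_abs_self x
          have := haIoo.1; have := hbIoo.2
          linarith [hx1]
      have habs2 : |(b - a) / 2| = (b - a) / 2 := abs_of_nonneg (by linarith)
      refine ⟨?_, hxI⟩
      rw [mem_setOf_eq]
      refine le_trans hcv (v_mono hf hf0 hv hxI hhalfI ?_)
      rw [habs2]
      exact hx1
    have hvol1 : volume S ≤ ENNReal.ofReal (b - a) := by
      have hsub : S ⊆ Icc a b := fun x hx =>
        ⟨csInf_le hScomp.bddBelow hx, le_csSup hScomp.bddAbove hx⟩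
      calc volume S ≤ volume (Icc a b) := measure_mono hsub
        _ = ENNReal.ofReal (b - a) := by rw [Real.volume_Icc]
    have hvol2 : ENNReal.ofReal (b - a) ≤ volume ({x | c ≤ v x} ∩ Icc (-π) π) := by
      calc ENNReal.ofReal (b - a)
          = volume (Icc (-((b - a) / 2)) ((b - a) / 2)) := by
            rw [Real.volume_Icc]
            congr 1
            ring
        _ ≤ _ := measure_mono hsubT
    exact le_trans hvol1 hvol2

lemma u_nonneg {f u u' : ℝ → ℝ} (hf : IntegrableOn f (Icc (-π) π))
    (hf0 : ∀ x ∈ Icc (-π) π, 0 ≤ f x) (hu : DirichletSol f u u') {x : ℝ}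
    (hx : x ∈ Icc (-π) π) : 0 ≤ u x := by
  rw [rep hf hu hx]
  exact setIntegral_nonneg measurableSet_Icc fun s hs =>
    mul_nonneg (Gker_nonneg hx hs) (hf0 s hs)

end DCP

open DCP

theorem dirichlet_comparison_principle (f : ℝ → ℝ)
    (hf : IntegrableOn f (Icc (-π) π)) (hf0 : ∀ x ∈ Icc (-π) π, 0 ≤ f x)
    (u u' v v' : ℝ → ℝ)
    (hu : DirichletSol f u u') (hv : DirichletSol (symDecRearr f) v v') :
    ∀ φ : ℝ → ℝ, ConvexOn ℝ univ φ → Monotone φ →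
      (∫ x in Icc (-π) π, φ (u x)) ≤ ∫ x in Icc (-π) π, φ (v x) := by
  intro φ hφc hφm
  have hπ := Real.pi_pos
  have hφcont : Continuous φ := by
    have h1 := ConvexOn.continuousOn isOpen_univ hφc
    rw [continuousOn_univ] at h1
    exact h1
  have hucont := u_cont hu
  have hvcont := u_cont hv
  have hgu : ContinuousOn (fun x => φ (u x) - φ 0) (Icc (-π) π) :=
    (hφcont.comp_continuousOn hucont).sub continuousOn_const
  have hgv : ContinuousOn (fun x => φ (v x) - φ 0) (Icc (-π) π) :=
    (hφcont.comp_continuousOn hvcont).sub continuousOn_const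
  have hguint : IntegrableOn (fun x => φ (u x) - φ 0) (Icc (-π) π) :=
    hgu.integrableOn_compact isCompact_Icc
  have hgvint : IntegrableOn (fun x => φ (v x) - φ 0) (Icc (-π) π) :=
    hgv.integrableOn_compact isCompact_Icc
  have hnnu : 0 ≤ᵐ[volume.restrict (Icc (-π) π)] fun x => φ (u x) - φ 0 :=
    (ae_restrict_iff' measurableSet_Icc).mpr (ae_of_all _ fun x hx =>
      sub_nonneg.mpr (hφm (u_nonneg hf hf0 hu hx)))
  have hnnv : 0 ≤ᵐ[volume.restrict (Icc (-π) π)] fun x => φ (v x) - φ 0 :=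
    (ae_restrict_iff' measurableSet_Icc).mpr (ae_of_all _ fun x hx =>
      sub_nonneg.mpr (hφm (v_nonneg hf hf0 hv hx)))
  have hmu : ∀ lam : ℝ, 0 < lam →
      (volume.restrict (Icc (-π) π)) {x | lam < φ (u x) - φ 0}
      ≤ (volume.restrict (Icc (-π) π)) {x | lam < φ (v x) - φ 0} := by
    intro lam hlam
    set T := {y : ℝ | φ 0 + lam < φ y} with hT
    have hTu : {x | lam < φ (u x) - φ 0} = u ⁻¹' T := by
      ext x
      simp only [mem_setOf_eq, mem_preimage, hT]
      constructor <;> intro h <;> linarith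
    have hTv : {x | lam < φ (v x) - φ 0} = v ⁻¹' T := by
      ext x
      simp only [mem_setOf_eq, mem_preimage, hT]
      constructor <;> intro h <;> linarith
    rcases eq_empty_or_nonempty T with hTemp | hTne
    · rw [hTu, hTv, hTemp]
      simp
    · have hTopen : IsOpen T := isOpen_lt continuous_const hφcont
      have hTup : ∀ y z : ℝ, y ∈ T → y ≤ z → z ∈ T := fun y z hy hyz =>
        lt_of_lt_of_le hy (hφm hyz)
      have hT0 : (0:ℝ) ∉ T := by
        rw [hT, mem_setOf_eq]
        push_neg
        linarith
      have hTpos : ∀ y ∈ T, (0:ℝ) ≤ y := by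
        intro y hy
        by_contra h
        push_neg at h
        exact hT0 (hTup y 0 hy h.le)
      have hTbdd : BddBelow T := ⟨0, fun y hy => hTpos y hy⟩
      set t0 := sInf T with ht0
      have ht0nn : 0 ≤ t0 := le_csInf hTne hTpos
      have hTeq : T = Ioi t0 := by
        ext y
        constructor
        · intro hy
          rcases eq_or_lt_of_le (csInf_le hTbdd hy) with he | hl
          · exfalso
            obtain ⟨ε, hε, hball⟩ := Metric.isOpen_iff.mp hTopen y hy
            have hmem : y - ε / 2 ∈ T := by
              apply hball
              rw [Metric.mem_ball, Real.dist_eq]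
              rw [show y - ε / 2 - y = -(ε / 2) from by ring, abs_neg,
                abs_of_nonneg (by linarith)]
              linarith
            have h2 := csInf_le hTbdd hmem
            rw [← he] at h2
            linarith
          · exact hl
        · intro hy
          obtain ⟨z, hzT, hzy⟩ := (csInf_lt_iff hTbdd hTne).mp hy
          exact hTup z y hzT hzy.le
      rw [hTu, hTv, hTeq]
      have hUnion : ∀ w : ℝ → ℝ,
          w ⁻¹' (Ioi t0) = ⋃ n : ℕ, {x | t0 + 1 / (n + 1) ≤ w x} := by
        intro w
        ext x
        simp only [mem_preimage, mem_Ioi, mem_iUnion, mem_setOf_eq]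
        constructor
        · intro h
          obtain ⟨n, hn⟩ := exists_nat_one_div_lt (show 0 < w x - t0 by linarith)
          exact ⟨n, by push_cast; push_cast at hn; linarith⟩
        · rintro ⟨n, hn⟩
          have h2 : 0 < (1:ℝ) / (n + 1) := by positivity
          linarith
      have hdir : Directed (· ⊆ ·) fun n : ℕ => {x | t0 + 1 / (n + 1 : ℝ) ≤ u x} := by
        refine directed_of_isDirected_le ?_
        intro n m hnm
        intro x hx
        rw [mem_setOf_eq] at hx ⊢
        have h2 : (1:ℝ) / (m + 1) ≤ 1 / (n + 1) := by
          apply div_le_div_of_nonneg_left (by norm_num) (by positivity)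
          push_cast
          linarith [(Nat.cast_le (α := ℝ)).mpr hnm]
        linarith
      calc (volume.restrict (Icc (-π) π)) (u ⁻¹' Ioi t0)
          = ⨆ n : ℕ, (volume.restrict (Icc (-π) π)) {x | t0 + 1 / (n + 1) ≤ u x} := by
            rw [hUnion u, Directed.measure_iUnion hdir]
        _ ≤ (volume.restrict (Icc (-π) π)) (v ⁻¹' Ioi t0) := by
            refine iSup_le fun n => ?_
            have hcpos : 0 < t0 + 1 / ((n:ℝ) + 1) := by positivity
            have hlev := level hf hf0 hu hv hcpos
            rw [Measure.restrict_apply' measurableSet_Icc,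
              Measure.restrict_apply' measurableSet_Icc]
            refine le_trans hlev (measure_mono (inter_subset_inter_left _ fun x hx => ?_))
            rw [mem_setOf_eq] at hx
            rw [mem_preimage, mem_Ioi]
            have h2 : 0 < (1:ℝ) / (n + 1) := by positivity
            linarith
  have hcore : (∫ x in Icc (-π) π, (φ (u x) - φ 0))
      ≤ ∫ x in Icc (-π) π, (φ (v x) - φ 0) := by
    rw [integral_eq_lintegral_of_nonneg_ae hnnu
      (hgu.aestronglyMeasurable measurableSet_Icc),
      integral_eq_lintegral_of_nonneg_ae hnnv
      (hgv.aestronglyMeasurable measurableSet_Icc)]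
    refine ENNReal.toReal_mono ?_ ?_
    · rw [← ofReal_integral_eq_lintegral_ofReal hgvint hnnv]
      exact ENNReal.ofReal_ne_top
    · rw [lintegral_eq_lintegral_meas_lt _ hnnu
        (hgu.aestronglyMeasurable measurableSet_Icc).aemeasurable,
        lintegral_eq_lintegral_meas_lt _ hnnv
        (hgv.aestronglyMeasurable measurableSet_Icc).aemeasurable]
      refine lintegral_mono_ae ((ae_restrict_iff' measurableSet_Ioi).mpr
        (ae_of_all _ fun lam hlam => ?_))
      exact hmu lam (mem_Ioi.mp hlam)
  have hconst : IntegrableOn (fun _ : ℝ => φ 0) (Icc (-π) π) :=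
    integrableOn_const measure_Icc_lt_top.ne
  have h1 : (∫ x in Icc (-π) π, φ (u x))
      = (∫ x in Icc (-π) π, (φ (u x) - φ 0)) + ∫ _x in Icc (-π) π, (φ 0 : ℝ) := by
    rw [← integral_add hguint hconst]
    refine setIntegral_congr_fun measurableSet_Icc fun x _ => ?_
    ring
  have h2 : (∫ x in Icc (-π) π, φ (v x))
      = (∫ x in Icc (-π) π, (φ (v x) - φ 0)) + ∫ _x in Icc (-π) π, (φ 0 : ℝ) := by
    rw [← integral_add hgvint hconst]
    refine setIntegral_congr_fun measurableSet_Icc fun x _ => ?_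
    ring
  rw [h1, h2]
  linarith
end
end

section
/- Let X ⊆ ℝ be measurable of finite length and f ∈ L¹(X). For t ∈ [0,|X|] define f★(t) = sup{∫_E f dx : E ⊆ X measurable, |E| = t}. Then f★(t) = ∫_0^t f*(s) ds, where f* is the decreasing rearrangement of f. -/
open Real MeasureTheory Set
open scoped ENNReal NNReal

noncomputable section

/-- The star function of `f` on a measurable set `X ⊆ ℝ`:
`f★(t) = sup {∫_E f : E ⊆ X measurable, |E| = t}`. -/
def starFn (X : Set ℝ) (f : ℝ → ℝ) (t : ℝ) : ℝ :=
  sSup {r : ℝ | ∃ E : Set ℝ, E ⊆ X ∧ MeasurableSet E ∧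
    (volume E).toReal = t ∧ r = ∫ x in E, f x}

/-- The decreasing rearrangement of `f : X → ℝ`, evaluated at `t`. -/
def decRearrOn (X : Set ℝ) (f : ℝ → ℝ) (t : ℝ) : ℝ :=
  sInf {s : ℝ | (volume {x : ℝ | x ∈ X ∧ s < f x}).toReal ≤ t}

namespace StarAux

/-- The distribution function `μ(s) = |X ∩ {g > s}|`. -/
def vmu (X : Set ℝ) (g : ℝ → ℝ) (s : ℝ) : ℝ≥0∞ := volume (X ∩ {x | s < g x})

/-- The decreasing rearrangement defined through `vmu`. -/
def fstar (X : Set ℝ) (g : ℝ → ℝ) (u : ℝ) : ℝ :=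
  sInf {s : ℝ | (vmu X g s).toReal ≤ u}

variable {X : Set ℝ} {g : ℝ → ℝ}

lemma vmu_anti (X : Set ℝ) (g : ℝ → ℝ) : Antitone (vmu X g) := by
  intro a b hab
  exact measure_mono (inter_subset_inter_right _ (fun x hx => lt_of_le_of_lt hab hx))

lemma vmu_le_volume (s : ℝ) : vmu X g s ≤ volume X := measure_mono inter_subset_left

lemma vmu_ne_top (hXfin : volume X ≠ ⊤) (s : ℝ) : vmu X g s ≠ ⊤ :=
  fun h => hXfin (top_le_iff.mp (h ▸ vmu_le_volume s))

lemma level_measurable (hX : MeasurableSet X) (hg : Measurable g) (s : ℝ) :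
    MeasurableSet (X ∩ {x | s < g x}) :=
  hX.inter (measurableSet_lt measurable_const hg)

/-- Right continuity of the distribution function. -/
lemma vmu_right_cont {s : ℝ} {a : ℝ≥0∞}
    (h : ∀ n : ℕ, vmu X g (s + 1 / (n + 1)) ≤ a) : vmu X g s ≤ a := by
  have hUnion : X ∩ {x | s < g x} = ⋃ n : ℕ, X ∩ {x | s + 1 / (n + 1) < g x} := by
    ext x
    simp only [mem_inter_iff, mem_setOf_eq, mem_iUnion]
    constructor
    · rintro ⟨hxX, hxs⟩
      obtain ⟨n, hn⟩ := exists_nat_one_div_lt (sub_pos.mpr hxs)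
      exact ⟨n, hxX, by push_cast at hn ⊢; linarith⟩
    · rintro ⟨n, hxX, hn⟩
      refine ⟨hxX, lt_trans (lt_add_of_pos_right s (by positivity)) hn⟩
  have hmono : Monotone (fun n : ℕ => X ∩ {x | s + 1 / (n + 1) < g x}) := by
    intro m n hmn
    apply inter_subset_inter_right
    intro x hx
    simp only [mem_setOf_eq] at hx ⊢
    have hmn' : (m : ℝ) ≤ n := Nat.cast_le.mpr hmn
    have : (1 : ℝ) / (n + 1) ≤ 1 / (m + 1) := by
      apply one_div_le_one_div_of_le (by positivity)
      linarith
    linarith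
  calc vmu X g s = ⨆ n : ℕ, vmu X g (s + 1 / (n + 1)) := by
        rw [vmu, hUnion, hmono.measure_iUnion]; rfl
    _ ≤ a := iSup_le h

/-- The distribution tends to `|X|` as `s → -∞`. -/
lemma vmu_sup_bot : volume X = ⨆ n : ℕ, vmu X g (-(n + 1 : ℝ)) := by
  have hmono : Monotone (fun n : ℕ => X ∩ {x | -(n + 1 : ℝ) < g x}) := by
    intro m n hmn
    apply inter_subset_inter_right
    intro x hx
    simp only [mem_setOf_eq] at hx ⊢
    have : (m : ℝ) ≤ n := Nat.cast_le.mpr hmn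
    linarith
  have hUnion : X = ⋃ n : ℕ, X ∩ {x | -(n + 1 : ℝ) < g x} := by
    ext x
    simp only [mem_iUnion, mem_inter_iff, mem_setOf_eq]
    constructor
    · intro hx
      obtain ⟨n, hn⟩ := exists_nat_gt (-(g x))
      exact ⟨n, hx, by linarith⟩
    · rintro ⟨n, hx, _⟩; exact hx
  calc volume X = volume (⋃ n : ℕ, X ∩ {x | -(n + 1 : ℝ) < g x}) := by rw [← hUnion]
    _ = ⨆ n : ℕ, vmu X g (-(n + 1 : ℝ)) := by rw [hmono.measure_iUnion]; rfl

/-- The distribution tends to `0` as `s → ∞`. -/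
lemma vmu_inf_top (hX : MeasurableSet X) (hXfin : volume X ≠ ⊤) (hg : Measurable g) :
    (⨅ n : ℕ, vmu X g n) = 0 := by
  have hanti : Antitone (fun n : ℕ => X ∩ {x | (n : ℝ) < g x}) := by
    intro m n hmn
    apply inter_subset_inter_right
    intro x hx
    simp only [mem_setOf_eq] at hx ⊢
    exact lt_of_le_of_lt (Nat.cast_le.mpr hmn) hx
  have hInter : (⋂ n : ℕ, X ∩ {x | (n : ℝ) < g x}) = ∅ := by
    ext x
    simp only [mem_iInter, mem_inter_iff, mem_setOf_eq, mem_empty_iff_false, iff_false, not_forall]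
    obtain ⟨n, hn⟩ := exists_nat_gt (g x)
    exact ⟨n, fun h => absurd h.2 (not_lt.mpr hn.le)⟩
  have := hanti.measure_iInter (μ := volume)
    (fun n => (level_measurable hX hg _).nullMeasurableSet)
    ⟨0, fun h => hXfin (top_le_iff.mp (h ▸ vmu_le_volume _))⟩
  rw [hInter] at this
  simpa [vmu] using this.symm

/-- Left limit: `|X ∩ {g ≥ σ}| = ⨅ₙ μ(σ - 1/(n+1))`. -/
lemma nu_eq (hX : MeasurableSet X) (hXfin : volume X ≠ ⊤) (hg : Measurable g) (σ : ℝ) :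
    volume (X ∩ {x | σ ≤ g x}) = ⨅ n : ℕ, vmu X g (σ - 1 / (n + 1)) := by
  have hanti : Antitone (fun n : ℕ => X ∩ {x | σ - 1 / (n + 1 : ℝ) < g x}) := by
    intro m n hmn
    apply inter_subset_inter_right
    intro x hx
    simp only [mem_setOf_eq] at hx ⊢
    have : (1 : ℝ) / (n + 1) ≤ 1 / (m + 1) := by
      apply one_div_le_one_div_of_le (by positivity)
      have : (m : ℝ) ≤ n := Nat.cast_le.mpr hmn
      linarith
    linarith
  have hInter : (⋂ n : ℕ, X ∩ {x | σ - 1 / (n + 1 : ℝ) < g x}) = X ∩ {x | σ ≤ g x} := by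
    ext x
    simp only [mem_iInter, mem_inter_iff, mem_setOf_eq]
    constructor
    · intro h
      refine ⟨(h 0).1, ?_⟩
      by_contra hlt
      push_neg at hlt
      obtain ⟨n, hn⟩ := exists_nat_one_div_lt (sub_pos.mpr hlt)
      have := (h n).2
      linarith
    · rintro ⟨hxX, hxs⟩ n
      refine ⟨hxX, lt_of_lt_of_le ?_ hxs⟩
      have : (0 : ℝ) < 1 / (n + 1 : ℝ) := by positivity
      linarith
  rw [← hInter, hanti.measure_iInter
    (fun n => (level_measurable hX hg _).nullMeasurableSet)
    ⟨0, fun h => hXfin (top_le_iff.mp (h ▸ vmu_le_volume _))⟩]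
  rfl

lemma S_nonempty (hX : MeasurableSet X) (hXfin : volume X ≠ ⊤) (hg : Measurable g)
    {u : ℝ} (hu : 0 < u) : {s : ℝ | (vmu X g s).toReal ≤ u}.Nonempty := by
  have h0 : (⨅ n : ℕ, vmu X g n) < ENNReal.ofReal u := by
    rw [vmu_inf_top hX hXfin hg]
    exact ENNReal.ofReal_pos.mpr hu
  obtain ⟨n, hn⟩ := iInf_lt_iff.mp h0
  exact ⟨n, by
    have := (ENNReal.lt_ofReal_iff_toReal_lt (vmu_ne_top hXfin _)).mp hn
    exact this.le⟩

lemma S_bddBelow (hXfin : volume X ≠ ⊤) {u : ℝ}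
    (hu : ENNReal.ofReal u < volume X) :
    BddBelow {s : ℝ | (vmu X g s).toReal ≤ u} := by
  rcases lt_or_ge u 0 with hu0 | hu0
  · refine ⟨0, fun s hs => ?_⟩
    simp only [mem_setOf_eq] at hs
    exact absurd (lt_of_le_of_lt hs hu0) (not_lt.mpr ENNReal.toReal_nonneg)
  · obtain ⟨n, hn⟩ : ∃ n : ℕ, ENNReal.ofReal u < vmu X g (-(n + 1 : ℝ)) := by
      rw [vmu_sup_bot (X := X) (g := g)] at hu
      exact lt_iSup_iff.mp hu
    refine ⟨-(n + 1 : ℝ), fun s hs => ?_⟩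
    simp only [mem_setOf_eq] at hs
    by_contra hlt
    push_neg at hlt
    have h1 : vmu X g (-(n + 1 : ℝ)) ≤ vmu X g s := vmu_anti X g hlt.le
    have h2 : vmu X g s ≤ ENNReal.ofReal u :=
      (ENNReal.le_ofReal_iff_toReal_le (vmu_ne_top hXfin s) hu0).mpr hs
    exact absurd (lt_of_lt_of_le hn (h1.trans h2)) (lt_irrefl _)

lemma fstar_le_iff (hX : MeasurableSet X) (hXfin : volume X ≠ ⊤) (hg : Measurable g)
    {u σ : ℝ} (hu0 : 0 < u) (hu : ENNReal.ofReal u < volume X) :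
    fstar X g u ≤ σ ↔ vmu X g σ ≤ ENNReal.ofReal u := by
  constructor
  · intro h
    apply vmu_right_cont
    intro n
    have hlt : fstar X g u < σ + 1 / (n + 1) := lt_of_le_of_lt h (lt_add_of_pos_right σ (by positivity))
    obtain ⟨s, hs, hs'⟩ := exists_lt_of_csInf_lt (S_nonempty hX hXfin hg hu0) hlt
    simp only [mem_setOf_eq] at hs
    exact (vmu_anti X g hs'.le).trans
      ((ENNReal.le_ofReal_iff_toReal_le (vmu_ne_top hXfin s) hu0.le).mpr hs)
  · intro h
    apply csInf_le (S_bddBelow hXfin hu)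
    simp only [mem_setOf_eq]
    exact (ENNReal.le_ofReal_iff_toReal_le (vmu_ne_top hXfin σ) hu0.le).mp h

lemma lt_fstar_iff (hX : MeasurableSet X) (hXfin : volume X ≠ ⊤) (hg : Measurable g)
    {u σ : ℝ} (hu0 : 0 < u) (hu : ENNReal.ofReal u < volume X) :
    σ < fstar X g u ↔ ENNReal.ofReal u < vmu X g σ := by
  rw [← not_le, ← not_le, fstar_le_iff hX hXfin hg hu0 hu]

lemma fstar_lt_iff (hX : MeasurableSet X) (hXfin : volume X ≠ ⊤) (hg : Measurable g)
    {u σ : ℝ} (hu0 : 0 < u) (hu : ENNReal.ofReal u < volume X) :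
    fstar X g u < σ ↔ ∃ s < σ, vmu X g s ≤ ENNReal.ofReal u := by
  constructor
  · intro h
    obtain ⟨s, hs, hs'⟩ := exists_lt_of_csInf_lt (S_nonempty hX hXfin hg hu0) h
    exact ⟨s, hs', (ENNReal.le_ofReal_iff_toReal_le (vmu_ne_top hXfin s) hu0.le).mpr hs⟩
  · rintro ⟨s, hsσ, hs⟩
    exact lt_of_le_of_lt (csInf_le (S_bddBelow hXfin hu)
      ((ENNReal.le_ofReal_iff_toReal_le (vmu_ne_top hXfin s) hu0.le).mp hs)) hsσ

lemma fstar_antitoneOn (hX : MeasurableSet X) (hXfin : volume X ≠ ⊤) (hg : Measurable g) :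
    AntitoneOn (fstar X g) (Ioo 0 (volume X).toReal) := by
  intro u hu u' hu' huu'
  have hbdd : BddBelow {s : ℝ | (vmu X g s).toReal ≤ u'} :=
    S_bddBelow hXfin ((ENNReal.ofReal_lt_iff_lt_toReal (le_of_lt hu'.1) hXfin).mpr hu'.2)
  apply csInf_le_csInf hbdd (S_nonempty hX hXfin hg hu.1)
  intro s hs
  simp only [mem_setOf_eq] at hs ⊢
  linarith


/-- On `ℝ`, any measurable set of finite volume contains measurable subsets of
every smaller measure. -/
lemma exists_subset_volume_eq (A : Set ℝ) (hA : MeasurableSet A)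
    (hfin : volume A ≠ ⊤) {r : ℝ≥0∞} (hr : r ≤ volume A) :
    ∃ F : Set ℝ, F ⊆ A ∧ MeasurableSet F ∧ volume F = r := by
  rcases eq_or_lt_of_le hr with hr' | hr'
  · exact ⟨A, subset_rfl, hA, hr'.symm⟩
  rcases eq_or_ne r 0 with hr0 | hr0
  · exact ⟨∅, empty_subset A, MeasurableSet.empty, by simp [hr0]⟩
  have hrt : r ≠ ⊤ := hr'.ne_top
  set r' := r.toReal with hr'def
  have hr'pos : 0 < r' := ENNReal.toReal_pos hr0 hrt
  set φ : ℝ → ℝ := fun τ => (volume (A ∩ Iic τ)).toReal with hφdef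
  have hfinτ : ∀ τ, volume (A ∩ Iic τ) ≠ ⊤ :=
    fun τ => fun h => hfin (top_le_iff.mp (h ▸ measure_mono inter_subset_left))
  have hmono : Monotone φ := fun a b hab => ENNReal.toReal_le_toReal (hfinτ a) (hfinτ b)
    |>.mpr <| measure_mono <| inter_subset_inter_right _ <| Iic_subset_Iic.mpr hab
  have hlip : ∀ a b : ℝ, a ≤ b → φ b ≤ φ a + (b - a) := by
    intro a b hab
    have hsub : A ∩ Iic b ⊆ (A ∩ Iic a) ∪ Ioc a b := by
      rintro x ⟨hxA, hxb⟩
      rcases le_or_gt x a with h | h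
      · exact Or.inl ⟨hxA, h⟩
      · exact Or.inr ⟨h, hxb⟩
    have h1 : volume (A ∩ Iic b) ≤ volume (A ∩ Iic a) + ENNReal.ofReal (b - a) := by
      calc volume (A ∩ Iic b) ≤ volume ((A ∩ Iic a) ∪ Ioc a b) := measure_mono hsub
        _ ≤ volume (A ∩ Iic a) + volume (Ioc a b) := measure_union_le _ _
        _ = volume (A ∩ Iic a) + ENNReal.ofReal (b - a) := by rw [Real.volume_Ioc]
    have h2 := ENNReal.toReal_le_toReal (hfinτ b)
      (by simp [ENNReal.add_ne_top, hfinτ a]) |>.mpr h1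
    rwa [ENNReal.toReal_add (hfinτ a) ENNReal.ofReal_ne_top,
      ENNReal.toReal_ofReal (by linarith)] at h2
  have hcont : Continuous φ := by
    apply LipschitzWith.continuous (K := 1)
    apply LipschitzWith.of_dist_le_mul
    intro a b
    rw [NNReal.coe_one, one_mul, Real.dist_eq, Real.dist_eq]
    rcases le_total a b with hab | hab
    · have h1 := hlip a b hab
      have h2 := hmono hab
      rw [abs_of_nonpos (by linarith : φ a - φ b ≤ 0), abs_of_nonpos (by linarith : a - b ≤ 0)]
      linarith
    · have h1 := hlip b a hab
      have h2 := hmono hab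
      rw [abs_of_nonneg (by linarith : 0 ≤ φ a - φ b), abs_of_nonneg (by linarith : 0 ≤ a - b)]
      linarith
  -- find a point where φ is below r'
  obtain ⟨a, ha⟩ : ∃ a : ℝ, volume (A ∩ Iic a) < r := by
    have hanti : Antitone (fun n : ℕ => A ∩ Iic (-(n : ℝ))) := fun m n hmn =>
      inter_subset_inter_right _ (Iic_subset_Iic.mpr (by
        have : (m : ℝ) ≤ n := Nat.cast_le.mpr hmn
        linarith))
    have hInter : (⋂ n : ℕ, A ∩ Iic (-(n : ℝ))) = ∅ := by
      ext x
      simp only [mem_iInter, mem_inter_iff, mem_Iic, mem_empty_iff_false, iff_false, not_forall]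
      obtain ⟨n, hn⟩ := exists_nat_gt (-x)
      exact ⟨n, fun h => absurd h.2 (by push_neg; linarith)⟩
    have htendsto := hanti.measure_iInter (μ := volume)
      (fun n => (hA.inter measurableSet_Iic).nullMeasurableSet)
      ⟨0, hfinτ _⟩
    rw [hInter, measure_empty] at htendsto
    have : (⨅ n : ℕ, volume (A ∩ Iic (-(n : ℝ)))) < r := by
      rw [← htendsto]
      exact pos_iff_ne_zero.mpr hr0
    obtain ⟨n, hn⟩ := iInf_lt_iff.mp this
    exact ⟨-(n : ℝ), hn⟩
  -- find a point where φ is above r'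
  obtain ⟨b, hb⟩ : ∃ b : ℝ, r < volume (A ∩ Iic b) := by
    have hmono' : Monotone (fun n : ℕ => A ∩ Iic (n : ℝ)) := fun m n hmn =>
      inter_subset_inter_right _ (Iic_subset_Iic.mpr (Nat.cast_le.mpr hmn))
    have hUnion : (⋃ n : ℕ, A ∩ Iic (n : ℝ)) = A := by
      ext x
      simp only [mem_iUnion, mem_inter_iff, mem_Iic]
      constructor
      · rintro ⟨n, h, _⟩; exact h
      · intro h
        obtain ⟨n, hn⟩ := exists_nat_gt x
        exact ⟨n, h, hn.le⟩
    have := hmono'.measure_iUnion (μ := volume)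
    rw [hUnion] at this
    have h2 : r < ⨆ n : ℕ, volume (A ∩ Iic (n : ℝ)) := this ▸ hr'
    obtain ⟨n, hn⟩ := lt_iSup_iff.mp h2
    exact ⟨(n : ℝ), hn⟩
  have hab : a ≤ b := by
    by_contra h
    push_neg at h
    exact absurd (lt_trans hb (lt_of_le_of_lt (measure_mono
      (inter_subset_inter_right _ (Iic_subset_Iic.mpr h.le))) ha)) (lt_irrefl _)
  have hmem : r' ∈ Icc (φ a) (φ b) := by
    constructor
    · exact le_of_lt ((ENNReal.toReal_lt_toReal (hfinτ a) hrt).mpr ha)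
    · exact le_of_lt ((ENNReal.toReal_lt_toReal hrt (hfinτ b)).mpr hb)
  obtain ⟨τ, _, hτ⟩ := intermediate_value_Icc hab hcont.continuousOn hmem
  refine ⟨A ∩ Iic τ, inter_subset_left, hA.inter measurableSet_Iic, ?_⟩
  have : (volume (A ∩ Iic τ)).toReal = r.toReal := hτ
  exact (ENNReal.toReal_eq_toReal_iff' (hfinτ τ) hrt).mp this


lemma ofReal_eq_max (a : ℝ) : ENNReal.ofReal a = ENNReal.ofReal (max a 0) := by
  rcases le_total a 0 with h | h
  · rw [max_eq_right h, ENNReal.ofReal_of_nonpos h]; simp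
  · rw [max_eq_left h]

/-- Layer cake identity for the positive part. -/
lemma pos_layer (hX : MeasurableSet X) (hXfin : volume X ≠ ⊤) (hg : Measurable g)
    {t c : ℝ} (ht : 0 < t) (htX : ENNReal.ofReal t ≤ volume X)
    (hc : vmu X g c ≤ ENNReal.ofReal t) :
    ∫⁻ u in Ioo 0 t, ENNReal.ofReal (fstar X g u - c)
      = ∫⁻ x in X, ENNReal.ofReal (g x - c) := by
  have htle : t ≤ (volume X).toReal := (ENNReal.ofReal_le_iff_le_toReal hXfin).mp htX
  have hult : ∀ u ∈ Ioo (0:ℝ) t, ENNReal.ofReal u < volume X := fun u hu =>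
    lt_of_lt_of_le ((ENNReal.ofReal_lt_ofReal_iff ht).mpr hu.2) htX
  have haem : AEMeasurable (fun u => max (fstar X g u - c) 0) (volume.restrict (Ioo 0 t)) :=
    aemeasurable_restrict_of_antitoneOn measurableSet_Ioo (by
      intro u hu u' hu' huu'
      have hsub : Ioo (0:ℝ) t ⊆ Ioo 0 (volume X).toReal := Ioo_subset_Ioo le_rfl htle
      have := fstar_antitoneOn hX hXfin hg (hsub hu) (hsub hu') huu'
      exact max_le_max (by linarith) le_rfl)
  have hL := lintegral_eq_lintegral_meas_lt (f := fun u => max (fstar X g u - c) 0)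
      (volume.restrict (Ioo 0 t))
      (Filter.Eventually.of_forall (fun u => le_max_right _ _)) haem
  have hR := lintegral_eq_lintegral_meas_lt (f := fun x => max (g x - c) 0)
      (volume.restrict X)
      (Filter.Eventually.of_forall (fun x => le_max_right _ _))
      (((hg.sub measurable_const).max measurable_const).aemeasurable.restrict
        (s := X))
  calc ∫⁻ u in Ioo 0 t, ENNReal.ofReal (fstar X g u - c)
      = ∫⁻ u in Ioo 0 t, ENNReal.ofReal (max (fstar X g u - c) 0) := by
        simp_rw [← ofReal_eq_max]
    _ = ∫⁻ r in Ioi (0:ℝ),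
          volume.restrict (Ioo 0 t) {u | r < max (fstar X g u - c) 0} := hL
    _ = ∫⁻ r in Ioi (0:ℝ), volume.restrict X {x | r < max (g x - c) 0} := by
        apply setLIntegral_congr_fun measurableSet_Ioi
        intro r hr
        replace hr : (0:ℝ) < r := hr
        beta_reduce
        rw [Measure.restrict_apply' measurableSet_Ioo, Measure.restrict_apply' hX]
        have hfin' : vmu X g (c + r) ≠ ⊤ := vmu_ne_top hXfin _
        have hm_le : (vmu X g (c + r)).toReal ≤ t := by
          have h1 : vmu X g (c + r) ≤ ENNReal.ofReal t :=
            le_trans (vmu_anti X g (by linarith : c ≤ c + r)) hc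
          exact (ENNReal.le_ofReal_iff_toReal_le hfin' ht.le).mp h1
        have hset : {u | r < max (fstar X g u - c) 0} ∩ Ioo 0 t
            = Ioo 0 (vmu X g (c + r)).toReal := by
          ext u
          simp only [mem_inter_iff, mem_setOf_eq, mem_Ioo]
          constructor
          · rintro ⟨hru, hu0, hut⟩
            have h1 : r < fstar X g u - c := by
              rcases lt_max_iff.mp hru with h | h
              · exact h
              · exact absurd h (not_lt.mpr hr.le)
            have h2 : c + r < fstar X g u := by linarith
            have h3 := (lt_fstar_iff hX hXfin hg hu0 (hult u ⟨hu0, hut⟩)).mp h2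
            exact ⟨hu0, (ENNReal.ofReal_lt_iff_lt_toReal hu0.le hfin').mp h3⟩
          · rintro ⟨hu0, hum⟩
            have hut : u < t := lt_of_lt_of_le hum hm_le
            have h3 : ENNReal.ofReal u < vmu X g (c + r) :=
              (ENNReal.ofReal_lt_iff_lt_toReal hu0.le hfin').mpr hum
            have h2 := (lt_fstar_iff hX hXfin hg hu0 (hult u ⟨hu0, hut⟩)).mpr h3
            exact ⟨lt_max_iff.mpr (Or.inl (by linarith)), hu0, hut⟩
        have hsetX : {x | r < max (g x - c) 0} ∩ X = X ∩ {x | c + r < g x} := by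
          ext x
          simp only [mem_inter_iff, mem_setOf_eq]
          constructor
          · rintro ⟨hrx, hxX⟩
            rcases lt_max_iff.mp hrx with h | h
            · exact ⟨hxX, by linarith⟩
            · exact absurd h (not_lt.mpr hr.le)
          · rintro ⟨hxX, hx⟩
            exact ⟨lt_max_iff.mpr (Or.inl (by linarith)), hxX⟩
        rw [hset, hsetX, Real.volume_Ioo, sub_zero, ENNReal.ofReal_toReal hfin']
        rfl
    _ = ∫⁻ x in X, ENNReal.ofReal (max (g x - c) 0) := hR.symm
    _ = ∫⁻ x in X, ENNReal.ofReal (g x - c) := by simp_rw [← ofReal_eq_max]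

/-- Layer cake identity for the negative part, at `t = |X|`. -/
lemma neg_layer (hX : MeasurableSet X) (hXfin : volume X ≠ ⊤) (hg : Measurable g)
    {t c : ℝ} (ht : 0 < t) (htX : ENNReal.ofReal t = volume X) :
    ∫⁻ u in Ioo 0 t, ENNReal.ofReal (c - fstar X g u)
      = ∫⁻ x in X, ENNReal.ofReal (c - g x) := by
  have htle : t ≤ (volume X).toReal := (ENNReal.ofReal_le_iff_le_toReal hXfin).mp htX.le
  have hult : ∀ u ∈ Ioo (0:ℝ) t, ENNReal.ofReal u < volume X := fun u hu =>
    htX ▸ (ENNReal.ofReal_lt_ofReal_iff ht).mpr hu.2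
  have haem : AEMeasurable (fun u => max (c - fstar X g u) 0) (volume.restrict (Ioo 0 t)) :=
    aemeasurable_restrict_of_monotoneOn measurableSet_Ioo (by
      intro u hu u' hu' huu'
      have hsub : Ioo (0:ℝ) t ⊆ Ioo 0 (volume X).toReal := Ioo_subset_Ioo le_rfl htle
      have := fstar_antitoneOn hX hXfin hg (hsub hu) (hsub hu') huu'
      exact max_le_max (by linarith) le_rfl)
  have hL := lintegral_eq_lintegral_meas_lt (f := fun u => max (c - fstar X g u) 0)
      (volume.restrict (Ioo 0 t))
      (Filter.Eventually.of_forall (fun u => le_max_right _ _)) haem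
  have hR := lintegral_eq_lintegral_meas_lt (f := fun x => max (c - g x) 0)
      (volume.restrict X)
      (Filter.Eventually.of_forall (fun x => le_max_right _ _))
      (((measurable_const.sub hg).max measurable_const).aemeasurable.restrict
        (s := X))
  calc ∫⁻ u in Ioo 0 t, ENNReal.ofReal (c - fstar X g u)
      = ∫⁻ u in Ioo 0 t, ENNReal.ofReal (max (c - fstar X g u) 0) := by
        simp_rw [← ofReal_eq_max]
    _ = ∫⁻ r in Ioi (0:ℝ),
          volume.restrict (Ioo 0 t) {u | r < max (c - fstar X g u) 0} := hL
    _ = ∫⁻ r in Ioi (0:ℝ), volume.restrict X {x | r < max (c - g x) 0} := by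
        apply setLIntegral_congr_fun measurableSet_Ioi
        intro r hr
        replace hr : (0:ℝ) < r := hr
        beta_reduce
        rw [Measure.restrict_apply' measurableSet_Ioo, Measure.restrict_apply' hX]
        set ν : ℝ≥0∞ := volume (X ∩ {x | c - r ≤ g x}) with hν
        have hνfin : ν ≠ ⊤ :=
          fun h => hXfin (top_le_iff.mp (h ▸ measure_mono inter_subset_left))
        set n : ℝ := ν.toReal with hn
        have hn0 : 0 ≤ n := ENNReal.toReal_nonneg
        have hνle : ν ≤ volume X := measure_mono inter_subset_left
        have hnle : n ≤ t := by
          rw [hn]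
          calc ν.toReal ≤ (volume X).toReal :=
            ENNReal.toReal_le_toReal hνfin hXfin |>.mpr hνle
          _ = t := by rw [← htX, ENNReal.toReal_ofReal ht.le]
        have hνofReal : ENNReal.ofReal n = ν := ENNReal.ofReal_toReal hνfin
        -- nu as an infimum
        have hnu := nu_eq hX hXfin hg (c - r)
        -- sandwich the set
        have hsub1 : Ioo n t ⊆ {u | r < max (c - fstar X g u) 0} ∩ Ioo 0 t := by
          rintro u ⟨hnu', hut⟩
          have hu0 : 0 < u := lt_of_le_of_lt hn0 hnu'
          have hoflt : ν < ENNReal.ofReal u := by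
            rw [← hνofReal]
            exact (ENNReal.ofReal_lt_ofReal_iff hu0).mpr hnu'
          obtain ⟨k, hk⟩ : ∃ k : ℕ, vmu X g (c - r - 1 / (k + 1)) < ENNReal.ofReal u := by
            rw [hν, hnu] at hoflt
            exact iInf_lt_iff.mp hoflt
          have hflt : fstar X g u < c - r := by
            apply (fstar_lt_iff hX hXfin hg hu0 (hult u ⟨hu0, hut⟩)).mpr
            exact ⟨c - r - 1 / (k + 1), by
              have : (0:ℝ) < 1 / (k + 1 : ℝ) := by positivity
              constructor
              · linarith
              · exact hk.le⟩
          exact ⟨lt_max_iff.mpr (Or.inl (show r < c - fstar X g u by linarith)), hu0, hut⟩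
        have hsub2 : {u | r < max (c - fstar X g u) 0} ∩ Ioo 0 t ⊆ Ico n t := by
          rintro u ⟨hru, hu0, hut⟩
          have hru' : r < max (c - fstar X g u) 0 := hru
          have h1 : r < c - fstar X g u := by
            rcases lt_max_iff.mp hru' with h | h
            · exact h
            · exact absurd h (not_lt.mpr hr.le)
          have hflt : fstar X g u < c - r := by linarith
          obtain ⟨sv, hsv, hsv'⟩ := (fstar_lt_iff hX hXfin hg hu0 (hult u ⟨hu0, hut⟩)).mp hflt
          have hνle' : ν ≤ vmu X g sv :=
            measure_mono (inter_subset_inter_right _ (fun x hx => lt_of_lt_of_le hsv hx))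
          have : ν ≤ ENNReal.ofReal u := hνle'.trans hsv'
          refine ⟨?_, hut⟩
          rw [hn]
          calc ν.toReal ≤ (ENNReal.ofReal u).toReal :=
            ENNReal.toReal_le_toReal hνfin ENNReal.ofReal_ne_top |>.mpr this
          _ = u := ENNReal.toReal_ofReal hu0.le
        have hvol : volume ({u | r < max (c - fstar X g u) 0} ∩ Ioo 0 t)
            = ENNReal.ofReal (t - n) := by
          apply le_antisymm
          · calc volume ({u | r < max (c - fstar X g u) 0} ∩ Ioo 0 t)
                ≤ volume (Ico n t) := measure_mono hsub2
              _ = ENNReal.ofReal (t - n) := Real.volume_Ico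
          · calc ENNReal.ofReal (t - n) = volume (Ioo n t) := Real.volume_Ioo.symm
              _ ≤ volume ({u | r < max (c - fstar X g u) 0} ∩ Ioo 0 t) :=
                measure_mono hsub1
        have hsetX : {x | r < max (c - g x) 0} ∩ X = X \ (X ∩ {x | c - r ≤ g x}) := by
          ext x
          simp only [mem_inter_iff, mem_setOf_eq, mem_diff]
          constructor
          · rintro ⟨hrx, hxX⟩
            rcases lt_max_iff.mp hrx with h | h
            · exact ⟨hxX, fun hmem => by have := hmem.2; linarith⟩
            · exact absurd h (not_lt.mpr hr.le)
          · rintro ⟨hxX, hx⟩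
            have : ¬ (c - r ≤ g x) := fun h => hx ⟨hxX, h⟩
            push_neg at this
            exact ⟨lt_max_iff.mpr (Or.inl (by linarith)), hxX⟩
        have hvolX : volume (X \ (X ∩ {x | c - r ≤ g x})) = ENNReal.ofReal (t - n) := by
          rw [measure_diff inter_subset_left
            ((hX.inter (measurableSet_le measurable_const hg)).nullMeasurableSet) hνfin]
          rw [← htX, ← hν, ← hνofReal, ← ENNReal.ofReal_sub _ hn0]
        rw [hvol, hsetX, hvolX]
    _ = ∫⁻ x in X, ENNReal.ofReal (max (c - g x) 0) := hR.symm
    _ = ∫⁻ x in X, ENNReal.ofReal (c - g x) := by simp_rw [← ofReal_eq_max]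

end StarAux

theorem starFn_eq_integral_decRearr (X : Set ℝ) (hX : MeasurableSet X)
    (hXfin : volume X < ⊤) (f : ℝ → ℝ) (hf : IntegrableOn f X) :
    ∀ t ∈ Icc 0 (volume X).toReal,
      starFn X f t = ∫ s in (0:ℝ)..t, decRearrOn X f s := by
  intro t ht
  obtain ⟨ht0, htT⟩ := ht
  have hXfi : volume X ≠ ⊤ := hXfin.ne
  -- measurable representative of f
  set g : ℝ → ℝ := hf.aestronglyMeasurable.mk f with hgdef
  have hgm : Measurable g := hf.aestronglyMeasurable.stronglyMeasurable_mk.measurable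
  have hfg : ∀ᵐ x ∂volume, x ∈ X → f x = g x :=
    (ae_restrict_iff' hX).mp hf.aestronglyMeasurable.ae_eq_mk
  have hgi : IntegrableOn g X := (integrable_congr hf.aestronglyMeasurable.ae_eq_mk).mp hf
  -- the decreasing rearrangement agrees with fstar
  have hvol_eq : ∀ s : ℝ, volume {x : ℝ | x ∈ X ∧ s < f x} = StarAux.vmu X g s := by
    intro s
    apply measure_congr
    rw [Filter.eventuallyEq_set]
    filter_upwards [hfg] with x hx
    simp only [mem_setOf_eq, mem_inter_iff]
    constructor
    · rintro ⟨h1, h2⟩; exact ⟨h1, (hx h1) ▸ h2⟩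
    · rintro ⟨h1, h2⟩; exact ⟨h1, (hx h1).symm ▸ h2⟩
  have hdec : decRearrOn X f = StarAux.fstar X g := by
    funext u
    unfold decRearrOn StarAux.fstar
    congr 1
    ext s
    simp only [mem_setOf_eq, hvol_eq s]
  have hfgE : ∀ E : Set ℝ, E ⊆ X → MeasurableSet E →
      (∫ x in E, f x) = ∫ x in E, g x := by
    intro E hEX hEm
    apply setIntegral_congr_ae hEm
    filter_upwards [hfg] with x hx hxE
    exact hx (hEX hxE)
  have habs : ∀ a : ℝ, (‖a‖₊ : ℝ≥0∞) = ENNReal.ofReal a + ENNReal.ofReal (-a) := by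
    intro a
    rw [← enorm_eq_nnnorm, Real.enorm_eq_ofReal_abs]
    rcases le_total 0 a with h | h
    · rw [abs_of_nonneg h,
        show ENNReal.ofReal (-a) = 0 from ENNReal.ofReal_of_nonpos (by linarith), add_zero]
    · rw [abs_of_nonpos h,
        show ENNReal.ofReal a = 0 from ENNReal.ofReal_of_nonpos h, zero_add]
  rcases eq_or_lt_of_le ht0 with ht0' | ht0'
  · -- case t = 0
    rw [← ht0']
    rw [intervalIntegral.integral_same]
    have hA : {r : ℝ | ∃ E : Set ℝ, E ⊆ X ∧ MeasurableSet E ∧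
        (volume E).toReal = 0 ∧ r = ∫ x in E, f x} = {0} := by
      ext r
      simp only [mem_setOf_eq, mem_singleton_iff]
      constructor
      · rintro ⟨E, hEX, hEm, hEt, rfl⟩
        have hEfin : volume E ≠ ⊤ :=
          fun h => hXfi (top_le_iff.mp (h ▸ measure_mono hEX))
        have hE0 : volume E = 0 := by
          rcases (ENNReal.toReal_eq_zero_iff _).mp hEt with h | h
          · exact h
          · exact absurd h hEfin
        rw [Measure.restrict_eq_zero.mpr hE0]
        exact integral_zero_measure f
      · rintro rfl
        exact ⟨∅, empty_subset X, MeasurableSet.empty, by simp, by simp⟩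
    rw [starFn, hA, csSup_singleton]
  · -- case t > 0
    rcases eq_or_lt_of_le htT with htT' | htT'
    · -- case t = |X|
      have htvol : ENNReal.ofReal t = volume X := by
        rw [htT', ENNReal.ofReal_toReal hXfi]
      -- the admissible set is a singleton
      have hA : {r : ℝ | ∃ E : Set ℝ, E ⊆ X ∧ MeasurableSet E ∧
          (volume E).toReal = t ∧ r = ∫ x in E, f x} = {∫ x in X, f x} := by
        ext r
        simp only [mem_setOf_eq, mem_singleton_iff]
        constructor
        · rintro ⟨E, hEX, hEm, hEt, rfl⟩
          have hEfin : volume E ≠ ⊤ :=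
            fun h => hXfi (top_le_iff.mp (h ▸ measure_mono hEX))
          have hEvol : volume E = volume X := by
            apply (ENNReal.toReal_eq_toReal_iff' hEfin hXfi).mp
            rw [hEt, htT']
          have hdiff : volume (X \ E) = 0 := by
            rw [measure_diff hEX hEm.nullMeasurableSet hEfin, hEvol, tsub_self]
          have hsplit := integral_inter_add_diff (μ := volume) hEm hf
          rw [inter_eq_self_of_subset_right hEX] at hsplit
          have hzero : (∫ x in X \ E, f x) = 0 := by
            rw [Measure.restrict_eq_zero.mpr hdiff]
            exact integral_zero_measure f
          rw [hzero, add_zero] at hsplit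
          exact hsplit
        · rintro rfl
          exact ⟨X, subset_rfl, hX, htT'.symm, rfl⟩
      rw [starFn, hA, csSup_singleton]
      -- right-hand side
      have hpos := StarAux.pos_layer hX hXfi hgm ht0' htvol.le
        (le_trans (StarAux.vmu_le_volume 0) htvol.ge) (c := 0)
      have hneg := StarAux.neg_layer hX hXfi hgm ht0' htvol (c := 0)
      simp only [sub_zero, zero_sub] at hpos hneg
      have haem : AEMeasurable (fun u => StarAux.fstar X g u) (volume.restrict (Ioo 0 t)) :=
        aemeasurable_restrict_of_antitoneOn measurableSet_Ioo
          ((StarAux.fstar_antitoneOn hX hXfi hgm).mono (Ioo_subset_Ioo le_rfl htT'.le))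
      have hPpfin : (∫⁻ x in X, ENNReal.ofReal (g x)) ≠ ⊤ := by
        refine ne_of_lt (lt_of_le_of_lt ?_ hgi.2)
        apply lintegral_mono
        intro x
        show ENNReal.ofReal (g x) ≤ (‖g x‖₊ : ℝ≥0∞)
        rw [habs]
        exact le_self_add
      have hPnfin : (∫⁻ x in X, ENNReal.ofReal (-g x)) ≠ ⊤ := by
        refine ne_of_lt (lt_of_le_of_lt ?_ hgi.2)
        apply lintegral_mono
        intro x
        show ENNReal.ofReal (-g x) ≤ (‖g x‖₊ : ℝ≥0∞)
        rw [habs]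
        exact le_add_self
      have hint : Integrable (fun u => StarAux.fstar X g u) (volume.restrict (Ioo 0 t)) := by
        refine ⟨(haem).aestronglyMeasurable, ?_⟩
        show (∫⁻ u in Ioo 0 t, (‖StarAux.fstar X g u‖₊ : ℝ≥0∞)) < ⊤
        have heq : (∫⁻ u in Ioo 0 t, (‖StarAux.fstar X g u‖₊ : ℝ≥0∞))
            = (∫⁻ u in Ioo 0 t, ENNReal.ofReal (StarAux.fstar X g u))
              + ∫⁻ u in Ioo 0 t, ENNReal.ofReal (-StarAux.fstar X g u) := by
          rw [← lintegral_add_left' haem.ennreal_ofReal]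
          exact lintegral_congr fun u => habs _
        rw [heq, hpos, hneg]
        exact ENNReal.add_lt_top.mpr ⟨hPpfin.lt_top, hPnfin.lt_top⟩
      have hgint : ∫ x in X, g x
          = (∫⁻ x in X, ENNReal.ofReal (g x)).toReal
            - (∫⁻ x in X, ENNReal.ofReal (-g x)).toReal :=
        integral_eq_lintegral_pos_part_sub_lintegral_neg_part hgi
      have hfint : ∫ u in Ioo (0:ℝ) t, StarAux.fstar X g u
          = (∫⁻ u in Ioo 0 t, ENNReal.ofReal (StarAux.fstar X g u)).toReal
            - (∫⁻ u in Ioo 0 t, ENNReal.ofReal (-StarAux.fstar X g u)).toReal :=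
        integral_eq_lintegral_pos_part_sub_lintegral_neg_part hint
      rw [intervalIntegral.integral_of_le ht0, integral_Ioc_eq_integral_Ioo, hdec,
        hfint, hpos, hneg, hfgE X subset_rfl hX, hgint]
    · -- main case 0 < t < |X|
      set c : ℝ := StarAux.fstar X g t with hcdef
      have htvol : ENNReal.ofReal t < volume X :=
        (ENNReal.ofReal_lt_iff_lt_toReal ht0 hXfi).mpr htT'
      have hc1 : StarAux.vmu X g c ≤ ENNReal.ofReal t :=
        (StarAux.fstar_le_iff hX hXfi hgm ht0' htvol).mp le_rfl
      have hc2 : ∀ s < c, ENNReal.ofReal t < StarAux.vmu X g s := by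
        intro s hs
        by_contra hle
        push_neg at hle
        exact absurd ((StarAux.fstar_le_iff hX hXfi hgm ht0' htvol).mpr hle) (not_le.mpr hs)
      have hult : ∀ u ∈ Ioo (0:ℝ) t, ENNReal.ofReal u < volume X := fun u hu =>
        lt_trans ((ENNReal.ofReal_lt_ofReal_iff ht0').mpr hu.2) htvol
      have hfc : ∀ u ∈ Ioo (0:ℝ) t, c ≤ StarAux.fstar X g u := by
        intro u hu
        by_contra hlt
        push_neg at hlt
        obtain ⟨s, hsc, hs⟩ := (StarAux.fstar_lt_iff hX hXfi hgm hu.1 (hult u hu)).mp hlt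
        have h1 := hc2 s hsc
        have h2 : ENNReal.ofReal u < ENNReal.ofReal t :=
          (ENNReal.ofReal_lt_ofReal_iff ht0').mpr hu.2
        exact absurd (lt_trans h1 (lt_of_le_of_lt hs h2)) (lt_irrefl _)
      have hpos := StarAux.pos_layer hX hXfi hgm ht0' htvol.le hc1
      have hconst : ∀ S : Set ℝ, volume S < ⊤ → IntegrableOn (fun _ => c) S volume :=
        fun S hS => integrableOn_const hS.ne
      have hIooFin : volume (Ioo (0:ℝ) t) < ⊤ := by
        rw [Real.volume_Ioo]; exact ENNReal.ofReal_lt_top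
      set P : ℝ≥0∞ := ∫⁻ x in X, ENNReal.ofReal (g x - c) with hPdef
      have hPfin : P ≠ ⊤ := by
        have hintgc : Integrable (fun x => g x - c) (volume.restrict X) :=
          hgi.sub (hconst X hXfin)
        refine ne_of_lt (lt_of_le_of_lt ?_ hintgc.2)
        apply lintegral_mono
        intro x
        show ENNReal.ofReal (g x - c) ≤ (‖g x - c‖₊ : ℝ≥0∞)
        rw [habs]
        exact le_self_add
      -- integrability of fstar - c on (0, t)
      have haem : AEMeasurable (fun u => StarAux.fstar X g u) (volume.restrict (Ioo 0 t)) :=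
        aemeasurable_restrict_of_antitoneOn measurableSet_Ioo
          ((StarAux.fstar_antitoneOn hX hXfi hgm).mono (Ioo_subset_Ioo le_rfl htT'.le))
      have hnn : 0 ≤ᵐ[volume.restrict (Ioo 0 t)] fun u => StarAux.fstar X g u - c := by
        filter_upwards [ae_restrict_mem measurableSet_Ioo] with u hu
        have := hfc u hu
        simp only [Pi.zero_apply]
        linarith
      have hsm : AEStronglyMeasurable (fun u => StarAux.fstar X g u - c)
          (volume.restrict (Ioo 0 t)) :=
        (haem.sub aemeasurable_const).aestronglyMeasurable
      have hlintn : (∫⁻ u in Ioo 0 t, (‖StarAux.fstar X g u - c‖₊ : ℝ≥0∞)) = P := by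
        rw [← hpos]
        apply lintegral_congr_ae
        filter_upwards [hnn] with u hu
        rw [← enorm_eq_nnnorm, Real.enorm_eq_ofReal_abs, abs_of_nonneg hu]
      have hintsub : Integrable (fun u => StarAux.fstar X g u - c)
          (volume.restrict (Ioo 0 t)) := by
        refine ⟨hsm, ?_⟩
        show (∫⁻ u in Ioo 0 t, (‖StarAux.fstar X g u - c‖₊ : ℝ≥0∞)) < ⊤
        rw [hlintn]
        exact hPfin.lt_top
      -- the right-hand side equals c * t + P.toReal
      have hrhs : (∫ s in (0:ℝ)..t, decRearrOn X f s) = c * t + P.toReal := by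
        rw [intervalIntegral.integral_of_le ht0, integral_Ioc_eq_integral_Ioo, hdec]
        have h1 : (∫ u in Ioo (0:ℝ) t, StarAux.fstar X g u)
            = ∫ u in Ioo (0:ℝ) t, ((StarAux.fstar X g u - c) + c) := by
          apply integral_congr_ae
          apply Filter.Eventually.of_forall
          intro u
          ring
        rw [h1, integral_add hintsub (hconst _ hIooFin), integral_const]
        have h2 : (∫ u in Ioo (0:ℝ) t, (StarAux.fstar X g u - c)) = P.toReal := by
          rw [integral_eq_lintegral_of_nonneg_ae hnn hsm, hpos]
        rw [h2]
        simp only [MeasurableSet.univ, Measure.restrict_apply, univ_inter, measureReal_restrict_apply_univ, measureReal_def, Real.volume_Ioo,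
          sub_zero, smul_eq_mul, ENNReal.toReal_ofReal ht0]
        ring
      -- value of ∫_X (g - c)⁺
      have hQ : (∫ x in X, max (g x - c) 0) = P.toReal := by
        rw [integral_eq_lintegral_of_nonneg_ae (f := fun x => max (g x - c) 0)
          (Filter.Eventually.of_forall fun x => le_max_right _ _)
          (((hgm.sub measurable_const).max measurable_const).aestronglyMeasurable.restrict)]
        rw [hPdef]
        congr 1
        exact lintegral_congr fun x => (StarAux.ofReal_eq_max _).symm
      -- upper bound for all competitors
      have hup : ∀ r ∈ {r : ℝ | ∃ E : Set ℝ, E ⊆ X ∧ MeasurableSet E ∧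
          (volume E).toReal = t ∧ r = ∫ x in E, f x}, r ≤ c * t + P.toReal := by
        rintro r ⟨E, hEX, hEm, hEt, rfl⟩
        rw [hfgE E hEX hEm]
        have hgiE : IntegrableOn g E := hgi.mono_set hEX
        have hsplit : (∫ x in E, g x) = (∫ x in E, (g x - c)) + c * t := by
          have h1 : (∫ x in E, g x) = ∫ x in E, ((g x - c) + c) := by
            apply integral_congr_ae
            apply Filter.Eventually.of_forall
            intro x
            ring
          have hEfin : volume E < ⊤ := lt_of_le_of_lt (measure_mono hEX) hXfin
          have hsubI : Integrable (fun x => g x - c) (volume.restrict E) :=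
            hgiE.sub (hconst E hEfin)
          rw [h1, integral_add hsubI (hconst E hEfin), integral_const]
          simp only [MeasurableSet.univ, Measure.restrict_apply, univ_inter, measureReal_restrict_apply_univ, measureReal_def, smul_eq_mul, hEt]
          ring
        rw [hsplit]
        have hEfin' : volume E < ⊤ := lt_of_le_of_lt (measure_mono hEX) hXfin
        have h3 : (∫ x in E, (g x - c)) ≤ ∫ x in E, max (g x - c) 0 :=
          integral_mono (hgiE.sub (hconst E hEfin'))
            (hgiE.sub (hconst E hEfin')).pos_part (fun x => le_max_left _ _)
        have h4 : (∫ x in E, max (g x - c) 0) ≤ ∫ x in X, max (g x - c) 0 :=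
          setIntegral_mono_set (hgi.sub (hconst X hXfin)).pos_part
            (Filter.Eventually.of_forall fun x => le_max_right _ _)
            (HasSubset.Subset.eventuallyLE hEX)
        linarith [hQ]
      -- existence of an optimal set
      have hmeas_eq : MeasurableSet (X ∩ {x | g x = c}) :=
        hX.inter (hgm (measurableSet_singleton c))
      have hmeas_lt : MeasurableSet (X ∩ {x | c < g x}) :=
        StarAux.level_measurable hX hgm c
      have hνt : ENNReal.ofReal t ≤ volume (X ∩ {x | c ≤ g x}) := by
        rw [StarAux.nu_eq hX hXfi hgm c]
        refine le_iInf fun n => ?_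
        refine (hc2 _ ?_).le
        have : (0:ℝ) < 1 / (n + 1 : ℝ) := by positivity
        linarith
      have hsplitν : volume (X ∩ {x | c ≤ g x})
          = StarAux.vmu X g c + volume (X ∩ {x | g x = c}) := by
        have hunion : X ∩ {x | c ≤ g x} = (X ∩ {x | c < g x}) ∪ (X ∩ {x | g x = c}) := by
          ext x
          simp only [mem_inter_iff, mem_setOf_eq, mem_union]
          constructor
          · rintro ⟨hxX, hxc⟩
            rcases lt_or_eq_of_le hxc with h | h
            · exact Or.inl ⟨hxX, h⟩
            · exact Or.inr ⟨hxX, h.symm⟩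
          · rintro (⟨hxX, h⟩ | ⟨hxX, h⟩)
            · exact ⟨hxX, h.le⟩
            · exact ⟨hxX, h.ge⟩
        rw [hunion, measure_union ?_ hmeas_eq]
        · rfl
        · apply Disjoint.inter_right'
          apply Disjoint.inter_left'
          rw [disjoint_left]
          intro x hx1 hx2
          simp only [mem_setOf_eq] at hx1 hx2
          linarith [hx2.le]
      have hflat : ENNReal.ofReal t - StarAux.vmu X g c ≤ volume (X ∩ {x | g x = c}) := by
        rw [tsub_le_iff_left]
        rw [← hsplitν]
        exact hνt
      have heqfin : volume (X ∩ {x | g x = c}) ≠ ⊤ :=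
        fun h => hXfi (top_le_iff.mp (h ▸ measure_mono inter_subset_left))
      obtain ⟨F, hFsub, hFm, hFvol⟩ :=
        StarAux.exists_subset_volume_eq _ hmeas_eq heqfin hflat
      set E₀ : Set ℝ := (X ∩ {x | c < g x}) ∪ F with hE₀def
      have hE₀X : E₀ ⊆ X :=
        union_subset inter_subset_left (hFsub.trans inter_subset_left)
      have hE₀m : MeasurableSet E₀ := hmeas_lt.union hFm
      have hdisj : Disjoint (X ∩ {x | c < g x}) F := by
        rw [disjoint_left]
        intro x hx1 hx2
        have h1 : c < g x := hx1.2
        have h2 : g x = c := (hFsub hx2).2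
        linarith [h2.le]
      have hvolE₀ : volume E₀ = ENNReal.ofReal t := by
        rw [hE₀def, measure_union hdisj hFm, hFvol]
        exact add_tsub_cancel_of_le hc1
      have hE₀t : (volume E₀).toReal = t := by
        rw [hvolE₀, ENNReal.toReal_ofReal ht0]
      set m : ℝ := (StarAux.vmu X g c).toReal with hmdef
      have hFt : (volume F).toReal = t - m := by
        rw [hFvol, ENNReal.toReal_sub_of_le hc1 ENNReal.ofReal_ne_top,
          ENNReal.toReal_ofReal ht0]
      -- value of the integral on E₀
      have hIF : (∫ x in F, g x) = c * (t - m) := by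
        rw [setIntegral_congr_fun hFm (fun x hx => (hFsub hx).2 : EqOn g (fun _ => c) F)]
        rw [integral_const]
        simp only [MeasurableSet.univ, Measure.restrict_apply, univ_inter, measureReal_restrict_apply_univ, measureReal_def, smul_eq_mul, hFt]
        ring
      have hI1 : (∫ x in X ∩ {x | c < g x}, g x) = P.toReal + c * m := by
        have hsplit2 : (∫ x in X ∩ {x | c < g x}, max (g x - c) 0)
            + (∫ x in X \ {x | c < g x}, max (g x - c) 0)
            = ∫ x in X, max (g x - c) 0 :=
          integral_inter_add_diff (measurableSet_lt measurable_const hgm)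
            ((hgi.sub (hconst X hXfin)).pos_part)
        have hzero : (∫ x in X \ {x | c < g x}, max (g x - c) 0) = 0 := by
          rw [setIntegral_congr_fun (hX.diff (measurableSet_lt measurable_const hgm))
            (fun x hx => max_eq_right (by
              have : ¬ c < g x := hx.2
              push_neg at this
              linarith) : EqOn (fun x => max (g x - c) 0) (fun _ => (0:ℝ)) _)]
          simp
        have hfirst : (∫ x in X ∩ {x | c < g x}, max (g x - c) 0)
            = ∫ x in X ∩ {x | c < g x}, (g x - c) := by
          apply setIntegral_congr_fun hmeas_lt
          intro x hx
          exact max_eq_left (by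
            have : c < g x := hx.2
            linarith)
        rw [hzero, add_zero, hfirst] at hsplit2
        -- hsplit2 : ∫ x in X ∩ {c < g}, (g x - c) = ∫ x in X, max (g x - c) 0
        have hgiE : IntegrableOn g (X ∩ {x | c < g x}) := hgi.mono_set inter_subset_left
        have h1 : (∫ x in X ∩ {x | c < g x}, g x)
            = (∫ x in X ∩ {x | c < g x}, (g x - c)) + c * m := by
          have h2 : (∫ x in X ∩ {x | c < g x}, g x)
              = ∫ x in X ∩ {x | c < g x}, ((g x - c) + c) := by
            apply integral_congr_ae
            apply Filter.Eventually.of_forall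
            intro x
            ring
          have hEfin2 : volume (X ∩ {x | c < g x}) < ⊤ :=
            lt_of_le_of_lt (measure_mono inter_subset_left) hXfin
          have hsubI2 : Integrable (fun x => g x - c)
              (volume.restrict (X ∩ {x | c < g x})) := hgiE.sub (hconst _ hEfin2)
          rw [h2, integral_add hsubI2 (hconst _ hEfin2), integral_const]
          simp only [MeasurableSet.univ, Measure.restrict_apply, univ_inter, measureReal_restrict_apply_univ, measureReal_def, smul_eq_mul]
          have hmr : (volume (X ∩ {x | c < g x})).toReal = m := rfl
          rw [hmr]
          ring
        rw [h1, hsplit2, hQ]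
      have hIE₀ : (∫ x in E₀, g x) = c * t + P.toReal := by
        rw [hE₀def, setIntegral_union hdisj hFm
          (hgi.mono_set (inter_subset_left))
          (hgi.mono_set (hFsub.trans inter_subset_left)), hI1, hIF]
        ring
      have hmem : (c * t + P.toReal) ∈ {r : ℝ | ∃ E : Set ℝ, E ⊆ X ∧ MeasurableSet E ∧
          (volume E).toReal = t ∧ r = ∫ x in E, f x} :=
        ⟨E₀, hE₀X, hE₀m, hE₀t, by rw [hfgE E₀ hE₀X hE₀m, hIE₀]⟩
      rw [starFn, hrhs]
      apply le_antisymm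
      · exact csSup_le ⟨_, hmem⟩ hup
      · exact le_csSup ⟨c * t + P.toReal, hup⟩ hmem
end
end

section
/- Let X ⊆ ℝ be measurable of finite length, u, v ∈ L¹(X) with u★ ≤ v★ on [0,|X|] and ∫_X u dx = ∫_X v dx. Then ess sup u ≤ ess sup v, ess inf v ≤ ess inf u, and osc u ≤ osc v, where osc = ess sup − ess inf. -/
open Real MeasureTheory Set

noncomputable section

theorem essSup_essInf_osc_comparison (X : Set ℝ) (hX : MeasurableSet X)
    (hXfin : volume X < ⊤) (u v : ℝ → ℝ)
    (hu : IntegrableOn u X) (hv : IntegrableOn v X)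
    (hstar : ∀ t ∈ Icc 0 (volume X).toReal, starFn X u t ≤ starFn X v t)
    (hmean : (∫ x in X, u x) = ∫ x in X, v x) :
    essSup (fun x => (u x : EReal)) (volume.restrict X) ≤
      essSup (fun x => (v x : EReal)) (volume.restrict X) ∧
    essInf (fun x => (v x : EReal)) (volume.restrict X) ≤
      essInf (fun x => (u x : EReal)) (volume.restrict X) ∧
    essSup (fun x => (u x : EReal)) (volume.restrict X) -
        essInf (fun x => (u x : EReal)) (volume.restrict X) ≤
      essSup (fun x => (v x : EReal)) (volume.restrict X) -
        essInf (fun x => (v x : EReal)) (volume.restrict X) := by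
  set μ := volume.restrict X with hμdef
  set T := (volume X).toReal with hTdef
  obtain ⟨u', hu'sm, huu'⟩ := hu.aestronglyMeasurable
  have hu'm : Measurable u' := hu'sm.measurable
  have hu'int : IntegrableOn u' X := hu.congr huu'
  -- boundedness of the star sets
  have hbdd : ∀ (f : ℝ → ℝ), IntegrableOn f X → ∀ t : ℝ,
      BddAbove {r : ℝ | ∃ E : Set ℝ, E ⊆ X ∧ MeasurableSet E ∧
        (volume E).toReal = t ∧ r = ∫ x in E, f x} := by
    intro f hf t
    refine ⟨∫ x in X, |f x|, ?_⟩
    rintro r ⟨E, hEX, hEm, hEt, rfl⟩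
    calc ∫ x in E, f x ≤ ∫ x in E, |f x| :=
          integral_mono (hf.mono_set hEX) ((hf.mono_set hEX).abs) fun x => le_abs_self _
      _ ≤ ∫ x in X, |f x| :=
          setIntegral_mono_set hf.abs (Filter.Eventually.of_forall fun x => abs_nonneg _)
            (HasSubset.Subset.eventuallyLE hEX)
  -- lower bound for star of u via a particular set
  have hstar_ge : ∀ (E : Set ℝ), E ⊆ X → MeasurableSet E →
      (∫ x in E, u x) ≤ starFn X u ((volume E).toReal) := by
    intro E hEX hEm
    exact le_csSup (hbdd u hu _) ⟨E, hEX, hEm, rfl, rfl⟩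
  -- u and u' have the same integrals on subsets of X
  have hiequ : ∀ E : Set ℝ, E ⊆ X → (∫ x in E, u x) = ∫ x in E, u' x := fun E hE =>
    integral_congr_ae (ae_restrict_of_ae_restrict_of_subset hE huu')
  -- measure facts
  have hXfin' : volume X ≠ ⊤ := hXfin.ne
  have hvolE : ∀ E : Set ℝ, E ⊆ X → volume E < ⊤ :=
    fun E hE => lt_of_le_of_lt (measure_mono hE) hXfin
  have hvoldiff : ∀ E : Set ℝ, E ⊆ X → MeasurableSet E →
      (volume (X \ E)).toReal = T - (volume E).toReal := by
    intro E hEX hEm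
    rw [measure_diff hEX hEm.nullMeasurableSet (hvolE E hEX).ne,
      ENNReal.toReal_sub_of_le (measure_mono hEX) hXfin']
  -- Part 1
  have h1 : essSup (fun x => (u x : EReal)) μ ≤ essSup (fun x => (v x : EReal)) μ := by
    by_contra hcon
    push_neg at hcon
    obtain ⟨c, hvc, hcu⟩ := EReal.exists_between_coe_real hcon
    obtain ⟨a, hva, hac⟩ := EReal.exists_between_coe_real hvc
    have hva' : ∀ᵐ x ∂μ, v x ≤ a := by
      filter_upwards [ae_lt_of_essSup_lt hva] with x hx
      exact le_of_lt (by exact_mod_cast hx)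
    set A : Set ℝ := {x | c < u' x} ∩ X with hAdef
    have hAm : MeasurableSet A := (measurableSet_lt measurable_const hu'm).inter hX
    have hAX : A ⊆ X := inter_subset_right
    have hA0 : volume A ≠ 0 := by
      intro h0
      have hle : ∀ᵐ x ∂μ, u x ≤ c := by
        have h1 : ∀ᵐ x ∂μ, u' x ≤ c := by
          rw [ae_iff]
          have : {x | ¬ u' x ≤ c} = {x | c < u' x} := by ext x; simp
          rw [this, hμdef, Measure.restrict_apply (measurableSet_lt measurable_const hu'm)]
          exact h0
        filter_upwards [h1, huu'] with x h1 h2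
        rw [h2]; exact h1
      have : essSup (fun x => (u x : EReal)) μ ≤ (c : EReal) :=
        essSup_le_of_ae_le _ (hle.mono fun x hx => EReal.coe_le_coe_iff.mpr hx)
      exact absurd (lt_of_le_of_lt this hcu) (lt_irrefl _)
    set t := (volume A).toReal with htdef
    have ht0 : 0 < t := ENNReal.toReal_pos hA0 (hvolE A hAX).ne
    have htT : t ≤ T := ENNReal.toReal_mono hXfin' (measure_mono hAX)
    -- lower bound c * t ≤ ∫_A u
    have hlow : c * t ≤ ∫ x in A, u x := by
      rw [hiequ A hAX]
      have : ∫ x in A, (c : ℝ) ≤ ∫ x in A, u' x := by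
        refine integral_mono_ae (integrableOn_const (hvolE A hAX).ne)
          (hu'int.mono_set hAX) ?_
        exact ((ae_restrict_iff' hAm).2 (Filter.Eventually.of_forall fun x hx => le_of_lt hx.1) :
          ∀ᵐ x ∂(volume.restrict A), c ≤ u' x)
      simpa [setIntegral_const, smul_eq_mul, mul_comm, Measure.real, ← htdef] using this
    -- upper bound starFn v t ≤ a * t
    have hupp : starFn X v t ≤ a * t := by
      refine csSup_le ⟨∫ x in A, v x, A, hAX, hAm, rfl, rfl⟩ ?_
      rintro r ⟨E, hEX, hEm, hEt, rfl⟩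
      have : ∫ x in E, v x ≤ ∫ x in E, (a : ℝ) := by
        refine integral_mono_ae (hv.mono_set hEX)
          (integrableOn_const (hvolE E hEX).ne) ?_
        exact ae_restrict_of_ae_restrict_of_subset hEX hva'
      calc ∫ x in E, v x ≤ ∫ x in E, (a : ℝ) := this
        _ = a * t := by rw [setIntegral_const, smul_eq_mul, Measure.real, hEt, mul_comm]
    have hchain : c * t ≤ a * t := by
      calc c * t ≤ ∫ x in A, u x := hlow
        _ ≤ starFn X u t := hstar_ge A hAX hAm
        _ ≤ starFn X v t := hstar t ⟨le_of_lt ht0, htT⟩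
        _ ≤ a * t := hupp
    have : c ≤ a := le_of_mul_le_mul_right hchain ht0
    exact absurd (lt_of_le_of_lt (EReal.coe_le_coe_iff.mpr this) hac) (lt_irrefl _)
  -- Part 2
  have h2 : essInf (fun x => (v x : EReal)) μ ≤ essInf (fun x => (u x : EReal)) μ := by
    by_contra hcon
    push_neg at hcon
    obtain ⟨b, hub, hbv⟩ := EReal.exists_between_coe_real hcon
    obtain ⟨b', hbb', hb'v⟩ := EReal.exists_between_coe_real hbv
    have hvb' : ∀ᵐ x ∂μ, b' ≤ v x := by
      filter_upwards [ae_lt_of_lt_essInf hb'v] with x hx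
      exact le_of_lt (by exact_mod_cast hx)
    set A : Set ℝ := {x | u' x < b} ∩ X with hAdef
    have hAm : MeasurableSet A := (measurableSet_lt hu'm measurable_const).inter hX
    have hAX : A ⊆ X := inter_subset_right
    have hA0 : volume A ≠ 0 := by
      intro h0
      have hle : ∀ᵐ x ∂μ, b ≤ u x := by
        have h1 : ∀ᵐ x ∂μ, b ≤ u' x := by
          rw [ae_iff]
          have : {x | ¬ b ≤ u' x} = {x | u' x < b} := by ext x; simp
          rw [this, hμdef, Measure.restrict_apply (measurableSet_lt hu'm measurable_const)]
          exact h0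
        filter_upwards [h1, huu'] with x h1 h2
        rw [h2]; exact h1
      have : (b : EReal) ≤ essInf (fun x => (u x : EReal)) μ :=
        le_essInf_of_ae_le _ (hle.mono fun x hx => EReal.coe_le_coe_iff.mpr hx)
      exact absurd (lt_of_lt_of_le hub this) (lt_irrefl _)
    set t := (volume A).toReal with htdef
    have ht0 : 0 < t := ENNReal.toReal_pos hA0 (hvolE A hAX).ne
    have htT : t ≤ T := ENNReal.toReal_mono hXfin' (measure_mono hAX)
    set E₀ : Set ℝ := X \ A with hE₀def
    have hE₀X : E₀ ⊆ X := diff_subset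
    have hE₀m : MeasurableSet E₀ := hX.diff hAm
    have hE₀t : (volume E₀).toReal = T - t := hvoldiff A hAX hAm
    -- ∫_A u ≤ b * t
    have hAu : ∫ x in A, u x ≤ b * t := by
      rw [hiequ A hAX]
      have : ∫ x in A, u' x ≤ ∫ x in A, (b : ℝ) := by
        refine integral_mono_ae (hu'int.mono_set hAX)
          (integrableOn_const (hvolE A hAX).ne) ?_
        exact ((ae_restrict_iff' hAm).2 (Filter.Eventually.of_forall fun x hx => le_of_lt hx.1) :
          ∀ᵐ x ∂(volume.restrict A), u' x ≤ b)
      simpa [setIntegral_const, smul_eq_mul, mul_comm, Measure.real, ← htdef] using this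
    -- lower bound: ∫_X u - b*t ≤ ∫_{E₀} u
    have hlow : (∫ x in X, u x) - b * t ≤ ∫ x in E₀, u x := by
      rw [hE₀def, integral_diff hAm hu hAX]
      linarith
    -- upper bound: starFn v (T - t) ≤ ∫_X v - b' * t
    have hupp : starFn X v (T - t) ≤ (∫ x in X, v x) - b' * t := by
      refine csSup_le ⟨∫ x in E₀, v x, E₀, hE₀X, hE₀m, hE₀t, rfl⟩ ?_
      rintro r ⟨E, hEX, hEm, hEt, rfl⟩
      have hcompl : (volume (X \ E)).toReal = t := by
        rw [hvoldiff E hEX hEm, hEt]; ring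
      have hEv : ∫ x in X \ E, (b' : ℝ) ≤ ∫ x in X \ E, v x := by
        refine integral_mono_ae (integrableOn_const (hvolE _ diff_subset).ne)
          (hv.mono_set diff_subset) ?_
        exact ae_restrict_of_ae_restrict_of_subset diff_subset hvb'
      have hEv' : b' * t ≤ ∫ x in X \ E, v x := by
        calc b' * t = ∫ x in X \ E, (b' : ℝ) := by
              rw [setIntegral_const, smul_eq_mul, Measure.real, hcompl, mul_comm]
          _ ≤ ∫ x in X \ E, v x := hEv
      have hdiffv : ∫ x in X \ E, v x = (∫ x in X, v x) - ∫ x in E, v x :=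
        integral_diff hEm hv hEX
      linarith
    have hmem : T - t ∈ Icc (0:ℝ) T := ⟨by linarith, by linarith⟩
    have hchain : (∫ x in X, u x) - b * t ≤ (∫ x in X, v x) - b' * t := by
      calc (∫ x in X, u x) - b * t ≤ ∫ x in E₀, u x := hlow
        _ ≤ starFn X u (T - t) := by
            have := hstar_ge E₀ hE₀X hE₀m
            rwa [hE₀t] at this
        _ ≤ starFn X v (T - t) := hstar (T - t) hmem
        _ ≤ (∫ x in X, v x) - b' * t := hupp
    rw [hmean] at hchain
    have : b' ≤ b := le_of_mul_le_mul_right (by linarith) ht0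
    exact absurd hbb' (not_lt.mpr (EReal.coe_le_coe_iff.mpr this))
  exact ⟨h1, h2, EReal.sub_le_sub h1 h2⟩
end
end
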